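/- arXiv:1604.03752 — 8 statements merged into one kernel-verified Lean document; each statement's English description precedes it below -/
import Mathlib

section
/- Let M be a nonnegative integer and let f : ℝ → ℝ be (M+1)-times continuously differentiable on [0,1]. Then the limit as L → ∞ (L a positive integer) of Σ_{ℓ=1}^{L} Σ_{m=0}^{M} ((−1)^m + 1)/((2L)^{m+1} (m+1)!) · f^{(m)}((2ℓ−1)/(2L)) equals ∫_0^1 f(t) dt. -/
open Filter

private
lemma tendsto_B (m : ℕ) (g : ℝ → ℝ) (C : ℝ)
    (hC : ∀ x ∈ Set.Ioo (0:ℝ) 1, |g x| ≤ C) :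
    Tendsto (fun L : ℕ => ∑ i ∈ Finset.range L,
      (((-1:ℝ)^(m+1) + 1) / ((2 * (L:ℝ))^(m+1+1) * ((Nat.factorial (m+1+1) : ℝ))))
        * g ((2 * ((1 + i : ℕ):ℝ) - 1) / (2 * L))) atTop (nhds 0) := by
  have hC0 : 0 ≤ C := le_trans (abs_nonneg _) (hC (1/2) (by norm_num))
  apply squeeze_zero_norm' (a := fun L : ℕ => C / L)
  · filter_upwards [eventually_ge_atTop 1] with L hL
    have hL0 : (0:ℝ) < L := by exact_mod_cast hL
    have key : ∀ i ∈ Finset.range L,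
        |(((-1:ℝ)^(m+1) + 1) / ((2 * (L:ℝ))^(m+1+1) * ((Nat.factorial (m+1+1) : ℝ))))
          * g ((2 * ((1 + i : ℕ):ℝ) - 1) / (2 * L))| ≤ C / (2 * L^2) := by
      intro i hi
      have hi' : i < L := Finset.mem_range.mp hi
      have hL1 : (1:ℝ) ≤ L := by exact_mod_cast hL
      have hmem : (2 * ((1 + i : ℕ):ℝ) - 1) / (2 * L) ∈ Set.Ioo (0:ℝ) 1 := by
        have hi1 : ((i:ℝ) + 1) ≤ L := by exact_mod_cast hi'
        constructor
        · apply div_pos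
          · push_cast; linarith [Nat.cast_nonneg (α := ℝ) i]
          · linarith
        · rw [div_lt_one (by linarith)]
          push_cast; linarith
      rw [abs_mul, abs_div]
      have h1 : |(-1:ℝ)^(m+1) + 1| ≤ 2 := by
        rcases neg_one_pow_eq_or ℝ (m+1) with h | h <;> rw [h] <;> norm_num
      have h2 : (2 * (L:ℝ))^2 ≤ (2 * (L:ℝ))^(m+1+1) * ((Nat.factorial (m+1+1) : ℝ)) := by
        have hf1 : (1:ℝ) ≤ (Nat.factorial (m+1+1) : ℝ) := by
          exact_mod_cast Nat.one_le_iff_ne_zero.mpr (Nat.factorial_ne_zero _)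
        have hp : (2 * (L:ℝ))^2 ≤ (2 * (L:ℝ))^(m+1+1) := by
          apply pow_le_pow_right₀ (by linarith) (by omega)
        nlinarith [pow_pos (by linarith : (0:ℝ) < 2 * L) (m+1+1)]
      have h3 : |(2 * (L:ℝ))^(m+1+1) * ((Nat.factorial (m+1+1) : ℝ))|
          = (2 * (L:ℝ))^(m+1+1) * ((Nat.factorial (m+1+1) : ℝ)) := by
        rw [abs_of_pos]
        positivity
      rw [h3]
      have hgb := hC _ hmem
      calc |(-1:ℝ)^(m+1) + 1| / ((2 * (L:ℝ))^(m+1+1) * ((Nat.factorial (m+1+1) : ℝ)))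
            * |g ((2 * ((1 + i : ℕ):ℝ) - 1) / (2 * L))|
          ≤ 2 / ((2 * (L:ℝ))^2) * C := by
            apply mul_le_mul _ hgb (abs_nonneg _) (by positivity)
            exact div_le_div₀ (by norm_num) h1 (by positivity) h2
        _ = C / (2 * L^2) := by ring
    calc ‖∑ i ∈ Finset.range L,
        (((-1:ℝ)^(m+1) + 1) / ((2 * (L:ℝ))^(m+1+1) * ((Nat.factorial (m+1+1) : ℝ))))
          * g ((2 * ((1 + i : ℕ):ℝ) - 1) / (2 * L))‖
        ≤ ∑ i ∈ Finset.range L, C / (2 * L^2) := by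
          refine (norm_sum_le _ _).trans (Finset.sum_le_sum fun i hi => ?_)
          rw [Real.norm_eq_abs]; exact key i hi
      _ = L * (C / (2 * L^2)) := by rw [Finset.sum_const, Finset.card_range]; simp [nsmul_eq_mul]
      _ ≤ C / L := by
          have h4 : (L:ℝ) * (C / (2 * L^2)) = C / (2*L) := by field_simp
          rw [h4, div_le_div_iff₀ (by positivity) hL0]
          nlinarith
  · exact tendsto_const_div_atTop_nhds_zero_nat C

private
lemma tendsto_A (f : ℝ → ℝ) (hfc : ContinuousOn f (Set.Icc 0 1)) :
    Tendsto (fun L : ℕ => ∑ i ∈ Finset.range L,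
      (((-1:ℝ)^0 + 1) / ((2 * (L:ℝ))^(0+1) * ((Nat.factorial (0+1) : ℝ))))
        * f ((2 * ((1 + i : ℕ):ℝ) - 1) / (2 * L))) atTop
      (nhds (∫ t in (0:ℝ)..1, f t)) := by
  rw [Metric.tendsto_atTop]
  intro ε hε
  obtain ⟨δ, hδ0, hδ⟩ := Metric.uniformContinuousOn_iff.mp
    (isCompact_Icc.uniformContinuousOn_of_continuous hfc) (ε/2) (by linarith)
  obtain ⟨N₀, hN₀⟩ := exists_nat_gt (1/δ)
  refine ⟨N₀ + 1, fun L hL => ?_⟩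
  have hL1 : 1 ≤ L := le_trans (Nat.le_add_left 1 N₀) hL
  have hL0 : (0:ℝ) < L := by exact_mod_cast hL1
  have hLδ : (1:ℝ)/L < δ := by
    rw [div_lt_iff₀ hL0]
    have hNL : (N₀:ℝ) ≤ L := by exact_mod_cast le_trans (Nat.le_succ N₀) hL
    have h1 : (1:ℝ)/δ < L := lt_of_lt_of_le hN₀ hNL
    rw [div_lt_iff₀ hδ0] at h1
    linarith
  set a : ℕ → ℝ := fun i => (i:ℝ)/L with ha
  have haii : ∀ i : ℕ, a i ≤ a (i+1) := by
    intro i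
    have hle : ((i:ℝ)) ≤ (((i+1:ℕ)):ℝ) := by exact_mod_cast Nat.le_succ i
    exact (div_le_div_iff_of_pos_right hL0).mpr hle
  have hsub : ∀ i, i < L → Set.uIcc (a i) (a (i+1)) ⊆ Set.Icc 0 1 := by
    intro i hi
    rw [Set.uIcc_of_le (haii i)]
    apply Set.Icc_subset_Icc
    · positivity
    · rw [div_le_one hL0]; exact_mod_cast hi
  have hint : ∀ i, i < L → IntervalIntegrable f MeasureTheory.volume (a i) (a (i+1)) :=
    fun i hi => (hfc.mono (hsub i hi)).intervalIntegrable
  have hIsum : (∫ t in (0:ℝ)..1, f t) = ∑ i ∈ Finset.range L, ∫ t in a i..a (i+1), f t := by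
    rw [intervalIntegral.sum_integral_adjacent_intervals hint]
    have h0 : a 0 = 0 := by simp [ha]
    have h1 : a L = 1 := by simp [ha]; omega
    rw [h0, h1]
  set c : ℕ → ℝ := fun i => (2 * ((1 + i : ℕ):ℝ) - 1) / (2 * L) with hc
  have hcmem : ∀ i, i < L → c i ∈ Set.Icc (a i) (a (i+1)) := by
    intro i hi
    constructor
    · rw [hc, ha]
      rw [div_le_div_iff₀ hL0 (by positivity)]
      push_cast; nlinarith
    · rw [hc, ha]
      rw [div_le_div_iff₀ (by positivity) hL0]
      push_cast; nlinarith
  have hterm : ∀ i, i < L →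
      (((-1:ℝ)^0 + 1) / ((2 * (L:ℝ))^(0+1) * ((Nat.factorial (0+1) : ℝ)))) * f (c i)
        = ∫ _t in a i..a (i+1), f (c i) := by
    intro i hi
    rw [intervalIntegral.integral_const, smul_eq_mul, ha]
    push_cast
    norm_num
    try field_simp
    try ring
    exact Or.inl trivial
  have key : ∀ i ∈ Finset.range L,
      |(((-1:ℝ)^0 + 1) / ((2 * (L:ℝ))^(0+1) * ((Nat.factorial (0+1) : ℝ)))) * f (c i)
        - ∫ t in a i..a (i+1), f t| ≤ ε/2 * (1/L) := by
    intro i hi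
    have hi' : i < L := Finset.mem_range.mp hi
    rw [hterm i hi', ← intervalIntegral.integral_sub (intervalIntegrable_const) (hint i hi')]
    have hbd : ∀ t ∈ Set.uIoc (a i) (a (i+1)), ‖f (c i) - f t‖ ≤ ε/2 := by
      intro t ht
      rw [Set.uIoc_of_le (haii i)] at ht
      have ht' : t ∈ Set.Icc (a i) (a (i+1)) := Set.Ioc_subset_Icc_self ht
      have htI : t ∈ Set.Icc (0:ℝ) 1 := by
        have := hsub i hi'; rw [Set.uIcc_of_le (haii i)] at this; exact this ht'
      have hcI : c i ∈ Set.Icc (0:ℝ) 1 := by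
        have := hsub i hi'; rw [Set.uIcc_of_le (haii i)] at this; exact this (hcmem i hi')
      have hdist : dist (c i) t < δ := by
        calc dist (c i) t ≤ a (i+1) - a i := Real.dist_le_of_mem_Icc (hcmem i hi') ht'
          _ = 1/L := by rw [ha]; push_cast; field_simp; ring
          _ < δ := hLδ
      have := hδ (c i) hcI t htI hdist
      rw [Real.dist_eq] at this
      rw [Real.norm_eq_abs]
      exact this.le
    have hnorm := intervalIntegral.norm_integral_le_of_norm_le_const hbd
    rw [Real.norm_eq_abs] at hnorm
    apply hnorm.trans
    have : |a (i+1) - a i| = 1/L := by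
      rw [abs_of_nonneg (by linarith [haii i]), ha]; push_cast; field_simp; ring
    rw [this]
  rw [Real.dist_eq, hIsum, ← Finset.sum_sub_distrib]
  calc |∑ i ∈ Finset.range L,
        ((((-1:ℝ)^0 + 1) / ((2 * (L:ℝ))^(0+1) * ((Nat.factorial (0+1) : ℝ)))) * f (c i)
          - ∫ t in a i..a (i+1), f t)|
      ≤ ∑ i ∈ Finset.range L, |(((-1:ℝ)^0 + 1) / ((2 * (L:ℝ))^(0+1)
          * ((Nat.factorial (0+1) : ℝ)))) * f (c i) - ∫ t in a i..a (i+1), f t| :=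
        Finset.abs_sum_le_sum_abs _ _
    _ ≤ ∑ _i ∈ Finset.range L, ε/2 * (1/L) := Finset.sum_le_sum key
    _ = L * (ε/2 * (1/L)) := by rw [Finset.sum_const, Finset.card_range, nsmul_eq_mul]
    _ = ε/2 := by field_simp
    _ < ε := by linarith

theorem enhanced_midpoint_tendsto
    (M : ℕ) (f : ℝ → ℝ)
    (hf : ContDiffOn ℝ (M + 1 : ℕ) f (Set.Icc 0 1)) :
    Tendsto
      (fun L : ℕ =>
        ∑ ℓ ∈ Finset.Icc 1 L, ∑ m ∈ Finset.range (M + 1),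
          (((-1 : ℝ) ^ m + 1) / ((2 * L : ℝ) ^ (m + 1) * ((m + 1).factorial : ℝ))) *
            iteratedDeriv m f ((2 * (ℓ : ℝ) - 1) / (2 * L)))
      atTop (nhds (∫ t in (0:ℝ)..1, f t)) := by
  -- bounds for iterated derivatives on the open interval
  have hbd : ∀ m : ℕ, m ≤ M → ∃ C : ℝ, ∀ x ∈ Set.Ioo (0:ℝ) 1,
      |iteratedDeriv (m+1) f x| ≤ C := by
    intro m hm
    have h1 : ContinuousOn (iteratedDerivWithin (m+1) f (Set.Icc 0 1)) (Set.Icc 0 1) :=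
      hf.continuousOn_iteratedDerivWithin (by exact_mod_cast Nat.succ_le_succ hm)
        (uniqueDiffOn_Icc one_pos)
    obtain ⟨C, hC⟩ := isCompact_Icc.exists_bound_of_continuousOn h1
    refine ⟨C, fun x hx => ?_⟩
    have heq : iteratedDeriv (m+1) f x = iteratedDerivWithin (m+1) f (Set.Icc 0 1) x := by
      have h2 : iteratedFDerivWithin ℝ (m+1) f (Set.Icc 0 1) x
          = iteratedFDeriv ℝ (m+1) f x := by
        rw [← iteratedFDerivWithin_inter_open isOpen_Ioo hx,
          Set.inter_eq_self_of_subset_right Set.Ioo_subset_Icc_self]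
        exact iteratedFDerivWithin_of_isOpen (m+1) isOpen_Ioo hx
      rw [iteratedDeriv_eq_iteratedFDeriv, iteratedDerivWithin_eq_iteratedFDerivWithin, h2]
    rw [heq, ← Real.norm_eq_abs]
    exact hC x (Set.Ioo_subset_Icc_self hx)
  choose! Cf hCf using hbd
  -- rewrite the sum
  have hrw : (fun L : ℕ =>
        ∑ ℓ ∈ Finset.Icc 1 L, ∑ m ∈ Finset.range (M + 1),
          (((-1 : ℝ) ^ m + 1) / ((2 * L : ℝ) ^ (m + 1) * ((m + 1).factorial : ℝ))) *
            iteratedDeriv m f ((2 * (ℓ : ℝ) - 1) / (2 * L)))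
      = fun L : ℕ =>
        (∑ i ∈ Finset.range L,
          (((-1:ℝ)^0 + 1) / ((2 * (L:ℝ))^(0+1) * ((Nat.factorial (0+1) : ℝ))))
            * (iteratedDeriv 0 f) ((2 * ((1 + i : ℕ):ℝ) - 1) / (2 * L)))
        + ∑ m ∈ Finset.range M, ∑ i ∈ Finset.range L,
          (((-1:ℝ)^(m+1) + 1) / ((2 * (L:ℝ))^(m+1+1) * ((Nat.factorial (m+1+1) : ℝ))))
            * (iteratedDeriv (m+1) f) ((2 * ((1 + i : ℕ):ℝ) - 1) / (2 * L)) := by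
    funext L
    rw [← Finset.Ico_add_one_right_eq_Icc, Finset.sum_Ico_eq_sum_range]
    simp only [Nat.add_sub_cancel]
    simp only [Finset.sum_range_succ']
    rw [Finset.sum_add_distrib, add_comm]
    congr 1
    exact Finset.sum_comm
  rw [hrw]
  have hA : Tendsto (fun L : ℕ =>
      ∑ i ∈ Finset.range L,
        (((-1:ℝ)^0 + 1) / ((2 * (L:ℝ))^(0+1) * ((Nat.factorial (0+1) : ℝ))))
          * (iteratedDeriv 0 f) ((2 * ((1 + i : ℕ):ℝ) - 1) / (2 * L))) atTop
      (nhds (∫ t in (0:ℝ)..1, f t)) := by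
    simpa only [iteratedDeriv_zero] using tendsto_A f hf.continuousOn
  have hB : Tendsto (fun L : ℕ =>
      ∑ m ∈ Finset.range M, ∑ i ∈ Finset.range L,
        (((-1:ℝ)^(m+1) + 1) / ((2 * (L:ℝ))^(m+1+1) * ((Nat.factorial (m+1+1) : ℝ))))
          * (iteratedDeriv (m+1) f) ((2 * ((1 + i : ℕ):ℝ) - 1) / (2 * L))) atTop
      (nhds 0) := by
    have := tendsto_finset_sum (Finset.range M) (fun m hm =>
      tendsto_B m (iteratedDeriv (m+1) f) (Cf m) (hCf m (Finset.mem_range.mp hm).le))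
    simpa using this
  have := hA.add hB
  rw [add_zero] at this
  exact this
end

section
/- For every real number x and every nonnegative integer M, arctan(x) equals the limit as L → ∞ (L a positive integer) of Σ_{ℓ=1}^{L} Σ_{m=0}^{M} ((−1)^m + 1)/((2L)^{m+1} (m+1)!) · (d^m/dt^m)[x/(1 + x²t²)] evaluated at t = (2ℓ−1)/(2L). -/
open Filter

open Real

lemma f_lip (x s t : ℝ) : |x/(1+x^2*s^2) - x/(1+x^2*t^2)| ≤ x^2 * |s - t| := by
  have hd1 : (0:ℝ) < 1 + x^2*s^2 := by positivity
  have hd2 : (0:ℝ) < 1 + x^2*t^2 := by positivity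
  have key : x/(1+x^2*s^2) - x/(1+x^2*t^2)
      = x^3*(t-s)*(t+s) / ((1+x^2*s^2)*(1+x^2*t^2)) := by
    field_simp; ring
  have hd12 : (0:ℝ) < (1+x^2*s^2)*(1+x^2*t^2) := by positivity
  rw [key, abs_div, abs_of_pos hd12, div_le_iff₀ hd12]
  have h1 : |x^3*(t-s)*(t+s)| = |x|^3 * |s - t| * |t + s| := by
    rw [abs_mul, abs_mul, abs_pow, ← abs_neg (t-s)]; ring_nf
  rw [h1]
  have hts : |t + s| ≤ |s| + |t| := by rw [add_comm]; exact abs_add_le s t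
  have hx3 : |x|^3 * (|s| + |t|) ≤ x^2 * ((1+x^2*s^2)*(1+x^2*t^2)) := by
    have hxs : x^2*s^2 = (|x| * |s|)^2 := by rw [mul_pow, sq_abs, sq_abs]
    have hxt : x^2*t^2 = (|x| * |t|)^2 := by rw [mul_pow, sq_abs, sq_abs]
    have hx2 : x^2 = |x|^2 := (sq_abs x).symm
    rw [hxs, hxt, hx2]
    have h1 : 2*(|x| * |s|) ≤ 1 + (|x| * |s|)^2 := by nlinarith [sq_nonneg (|x| * |s| - 1)]
    have h2 : 2*(|x| * |t|) ≤ 1 + (|x| * |t|)^2 := by nlinarith [sq_nonneg (|x| * |t| - 1)]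
    have hA : (1:ℝ) ≤ 1 + (|x| * |s|)^2 := by nlinarith [sq_nonneg (|x| * |s|)]
    have hB : (1:ℝ) ≤ 1 + (|x| * |t|)^2 := by nlinarith [sq_nonneg (|x| * |t|)]
    have hAB : (1 + (|x| * |s|)^2) + (1 + (|x| * |t|)^2)
        ≤ 2*((1 + (|x| * |s|)^2) * (1 + (|x| * |t|)^2)) := by nlinarith [mul_nonneg (sub_nonneg.2 hA) (sub_nonneg.2 hB)]
    have e1 : |x|^3 * (|s| + |t|) = |x|^2 * (|x| * |s|) + |x|^2 * (|x| * |t|) := by ring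
    have e2 : |x|^2 * (|x| * |s|) + |x|^2 * (|x| * |t|)
        ≤ |x|^2 * (((1 + (|x| * |s|)^2) + (1 + (|x| * |t|)^2))/2) := by nlinarith [mul_le_mul_of_nonneg_left h1 (sq_nonneg (|x|)), mul_le_mul_of_nonneg_left h2 (sq_nonneg (|x|))]
    have e3 : |x|^2 * (((1 + (|x| * |s|)^2) + (1 + (|x| * |t|)^2))/2)
        ≤ |x|^2 * ((1 + (|x| * |s|)^2) * (1 + (|x| * |t|)^2)) := by
      apply mul_le_mul_of_nonneg_left _ (sq_nonneg (|x|))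
      linarith
    linarith [e1, e2, e3]
  calc |x|^3 * |s - t| * |t+s| ≤ |x|^3 * |s - t| * (|s| + |t|) := by
        gcongr
    _ = |x|^3 * (|s| + |t|) * |s - t| := by ring
    _ ≤ x^2 * ((1+x^2*s^2)*(1+x^2*t^2)) * |s - t| := by gcongr
    _ = x^2 * |s-t| * ((1+x^2*s^2)*(1+x^2*t^2)) := by ring

lemma f_cont (x : ℝ) : Continuous (fun t : ℝ => x / (1 + x ^ 2 * t ^ 2)) := by
  apply continuous_const.div (by continuity) (fun t => by positivity)

lemma f_smooth (x : ℝ) : ContDiff ℝ ⊤ (fun t : ℝ => x / (1 + x ^ 2 * t ^ 2)) := by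
  apply ContDiff.div contDiff_const (by fun_prop) (fun t => by positivity)

lemma f_integral (x : ℝ) :
    ∫ t in (0:ℝ)..(1:ℝ), x / (1 + x ^ 2 * t ^ 2) = Real.arctan x := by
  have hderiv : ∀ t ∈ Set.uIcc (0:ℝ) 1,
      HasDerivAt (fun t : ℝ => Real.arctan (x * t)) (x / (1 + x ^ 2 * t ^ 2)) t := by
    intro t _
    have h1 := Real.hasDerivAt_arctan (x * t)
    have h2 : HasDerivAt (fun t : ℝ => x * t) x t := by
      simpa using (hasDerivAt_id t).const_mul x
    have := h1.comp t h2
    have e : x / (1 + x ^ 2 * t ^ 2) = 1 / (1 + (x * t) ^ 2) * x := by rw [mul_pow]; field_simp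
    rw [e]; exact this
  have := intervalIntegral.integral_eq_sub_of_hasDerivAt hderiv
    ((f_cont x).intervalIntegrable 0 1)
  simpa using this

lemma reindex (L : ℕ) (g : ℕ → ℝ) :
    ∑ ℓ ∈ Finset.Icc 1 L, g ℓ = ∑ k ∈ Finset.range L, g (k + 1) := by
  rw [← Finset.Ico_add_one_right_eq_Icc, Finset.sum_Ico_eq_sum_range]
  simp [add_comm]

lemma lemmaA (x : ℝ) :
    Tendsto (fun L : ℕ => ∑ ℓ ∈ Finset.Icc 1 L,
        (1 / (L:ℝ)) * (x / (1 + x ^ 2 * ((2 * (ℓ:ℝ) - 1) / (2 * L)) ^ 2)))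
      atTop (nhds (Real.arctan x)) := by
  set f : ℝ → ℝ := fun t => x / (1 + x ^ 2 * t ^ 2) with hf
  rw [← tendsto_sub_nhds_zero_iff]
  apply squeeze_zero_norm' (a := fun L : ℕ => x ^ 2 / L)
    ?_ (tendsto_const_div_atTop_nhds_zero_nat _)
  filter_upwards [eventually_ge_atTop 1] with L hL
  have hL0 : (0:ℝ) < L := by exact_mod_cast hL
  have hLne : (L:ℝ) ≠ 0 := ne_of_gt hL0
  -- split the integral
  have hint : ∀ k < L, IntervalIntegrable f MeasureTheory.volume ((k:ℝ)/L) (((k:ℕ)+1:ℝ)/L) :=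
    fun k _ => (f_cont x).intervalIntegrable _ _
  have hsplit : ∑ k ∈ Finset.range L, ∫ t in ((k:ℝ)/L)..(((k:ℝ)+1)/L), f t
      = Real.arctan x := by
    have := intervalIntegral.sum_integral_adjacent_intervals
      (a := fun k : ℕ => (k:ℝ)/L) (n := L)
      (μ := MeasureTheory.volume) (f := f)
      (fun k _ => (f_cont x).intervalIntegrable _ _)
    simp only [Nat.cast_zero, zero_div, Nat.cast_add, Nat.cast_one] at this
    rw [this, div_self hLne, f_integral x]
  -- rewrite the sum
  rw [reindex]
  have hterm : ∀ k ∈ Finset.range L,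
      ‖(1 / (L:ℝ)) * f ((2 * ((k:ℝ)+1) - 1) / (2 * L))
        - ∫ t in ((k:ℝ)/L)..(((k:ℝ)+1)/L), f t‖ ≤ x ^ 2 / L ^ 2 := by
    intro k _
    set a : ℝ := (k:ℝ)/L
    set b : ℝ := ((k:ℝ)+1)/L
    set c : ℝ := (2 * ((k:ℝ)+1) - 1) / (2 * L)
    have hk0 : (0:ℝ) ≤ (k:ℝ) := Nat.cast_nonneg k
    have hab : a ≤ b := by
      show (k:ℝ)/L ≤ ((k:ℝ)+1)/L
      gcongr
      linarith
    have hba : b - a = 1 / L := by simp only [a, b]; field_simp; ring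
    have hac : a ≤ c := by
      rw [div_le_div_iff₀ hL0 (by positivity)]
      ring_nf
      nlinarith
    have hcb : c ≤ b := by
      rw [div_le_div_iff₀ (by positivity) hL0]
      nlinarith
    have hconst : (1 / (L:ℝ)) * f c = ∫ _ in a..b, f c := by
      rw [intervalIntegral.integral_const, smul_eq_mul, hba]
    rw [hconst, ← intervalIntegral.integral_sub
      (intervalIntegrable_const) ((f_cont x).intervalIntegrable _ _)]
    have hbd : ∀ t ∈ Set.uIoc a b, ‖f c - f t‖ ≤ x ^ 2 / L := by
      intro t ht
      rw [Set.uIoc_of_le hab] at ht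
      have h1 : |f c - f t| ≤ x ^ 2 * |c - t| := f_lip x c t
      have h2 : |c - t| ≤ 1 / L := by
        rw [abs_le]
        constructor <;> [linarith [ht.2, hac, hba]; linarith [ht.1, hcb, hba]]
      calc ‖f c - f t‖ ≤ x ^ 2 * |c - t| := h1
        _ ≤ x ^ 2 * (1 / L) := by gcongr
        _ = x ^ 2 / L := by ring
    have := intervalIntegral.norm_integral_le_of_norm_le_const hbd
    rw [hba] at this
    calc ‖∫ t in a..b, (f c - f t)‖ ≤ x ^ 2 / L * |1 / (L:ℝ)| := this
      _ = x ^ 2 / L ^ 2 := by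
        rw [abs_of_pos (by positivity)]; ring
  push_cast
  calc ‖∑ k ∈ Finset.range L, (1 / (L:ℝ)) * f ((2 * ((k:ℝ)+1) - 1) / (2 * L)) - Real.arctan x‖
      = ‖∑ k ∈ Finset.range L, ((1 / (L:ℝ)) * f ((2 * ((k:ℝ)+1) - 1) / (2 * L))
          - ∫ t in ((k:ℝ)/L)..(((k:ℝ)+1)/L), f t)‖ := by
        rw [Finset.sum_sub_distrib, hsplit]
    _ ≤ ∑ k ∈ Finset.range L, ‖(1 / (L:ℝ)) * f ((2 * ((k:ℝ)+1) - 1) / (2 * L))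
          - ∫ t in ((k:ℝ)/L)..(((k:ℝ)+1)/L), f t‖ := norm_sum_le _ _
    _ ≤ ∑ _k ∈ Finset.range L, x ^ 2 / L ^ 2 := Finset.sum_le_sum hterm
    _ = L * (x ^ 2 / L ^ 2) := by rw [Finset.sum_const, Finset.card_range]; ring
    _ = x ^ 2 / L := by field_simp

lemma lemmaB (x : ℝ) (m : ℕ) (hm : 1 ≤ m) :
    Tendsto (fun L : ℕ => ∑ ℓ ∈ Finset.Icc 1 L,
        (((-1 : ℝ) ^ m + 1) / ((2 * L : ℝ) ^ (m + 1) * ((m + 1).factorial : ℝ))) *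
          iteratedDeriv m (fun t : ℝ => x / (1 + x ^ 2 * t ^ 2)) ((2 * (ℓ:ℝ) - 1) / (2 * L)))
      atTop (nhds 0) := by
  set g : ℝ → ℝ := iteratedDeriv m (fun t : ℝ => x / (1 + x ^ 2 * t ^ 2)) with hg
  have hgc : Continuous g := (f_smooth x).continuous_iteratedDeriv m le_top
  obtain ⟨C, hC⟩ := (isCompact_Icc (a := (0:ℝ)) (b := 1)).exists_bound_of_continuousOn
    hgc.continuousOn
  have hC0 : 0 ≤ C := le_trans (norm_nonneg (g 0)) (hC 0 (by norm_num))
  apply squeeze_zero_norm' (a := fun L : ℕ => C / L)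
    ?_ (tendsto_const_div_atTop_nhds_zero_nat _)
  filter_upwards [eventually_ge_atTop 1] with L hL
  have hL0 : (0:ℝ) < L := by exact_mod_cast hL
  have hfac : (1:ℝ) ≤ ((m + 1).factorial : ℝ) := by exact_mod_cast (m + 1).factorial_pos
  have hL1 : (1:ℝ) ≤ L := by exact_mod_cast hL
  have hden : (0:ℝ) < (2*(L:ℝ))^(m+1) * ((m + 1).factorial : ℝ) :=
    mul_pos (pow_pos (by linarith) _) (by exact_mod_cast (m + 1).factorial_pos)
  have hcoef : |((-1 : ℝ) ^ m + 1) / ((2 * L : ℝ) ^ (m + 1) * ((m + 1).factorial : ℝ))|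
      ≤ 1 / (2 * L ^ 2) := by
    have hden2 : (0:ℝ) < 2 * (L:ℝ) ^ 2 := by positivity
    rw [abs_div, abs_of_pos hden, div_le_div_iff₀ hden hden2]
    have h1 : |(-1 : ℝ) ^ m + 1| ≤ 2 := by
      have h := abs_add_le ((-1 : ℝ) ^ m) 1
      simp only [abs_pow, abs_neg, abs_one, one_pow] at h
      linarith
    have h2 : (2 * (L:ℝ)) ^ 2 * 1 ≤ (2 * L : ℝ) ^ (m + 1) * ((m + 1).factorial : ℝ) := by
      apply mul_le_mul _ hfac zero_le_one (by positivity)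
      apply pow_le_pow_right₀ (by linarith) (by omega)
    calc |(-1 : ℝ) ^ m + 1| * (2 * (L:ℝ) ^ 2)
        ≤ 2 * (2 * (L:ℝ) ^ 2) := mul_le_mul_of_nonneg_right h1 (le_of_lt hden2)
      _ = (2 * (L:ℝ)) ^ 2 * 1 := by ring
      _ ≤ (2 * L : ℝ) ^ (m + 1) * ((m + 1).factorial : ℝ) := h2
      _ = 1 * ((2 * L : ℝ) ^ (m + 1) * ((m + 1).factorial : ℝ)) := (one_mul _).symm
  have hmem : ∀ ℓ ∈ Finset.Icc 1 L, (2 * (ℓ:ℝ) - 1) / (2 * L) ∈ Set.Icc (0:ℝ) 1 := by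
    intro ℓ hℓ
    rw [Finset.mem_Icc] at hℓ
    have h1 : (1:ℝ) ≤ (ℓ:ℝ) := by exact_mod_cast hℓ.1
    have h2 : (ℓ:ℝ) ≤ L := by exact_mod_cast hℓ.2
    constructor
    · apply div_nonneg (by linarith) (by linarith)
    · rw [div_le_one (by linarith)]; linarith
  calc ‖∑ ℓ ∈ Finset.Icc 1 L,
        (((-1 : ℝ) ^ m + 1) / ((2 * L : ℝ) ^ (m + 1) * ((m + 1).factorial : ℝ))) *
          g ((2 * (ℓ:ℝ) - 1) / (2 * L))‖
      ≤ ∑ ℓ ∈ Finset.Icc 1 L, ‖(((-1 : ℝ) ^ m + 1) / ((2 * L : ℝ) ^ (m + 1) * ((m + 1).factorial : ℝ))) *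
          g ((2 * (ℓ:ℝ) - 1) / (2 * L))‖ := norm_sum_le _ _
    _ ≤ ∑ _ℓ ∈ Finset.Icc 1 L, (1 / (2 * (L:ℝ) ^ 2)) * C := by
        apply Finset.sum_le_sum
        intro ℓ hℓ
        rw [norm_mul]
        exact mul_le_mul hcoef (hC _ (hmem ℓ hℓ)) (norm_nonneg _) (by positivity)
    _ = L * ((1 / (2 * (L:ℝ) ^ 2)) * C) := by
        rw [Finset.sum_const, Nat.card_Icc]; simp
    _ ≤ C / L := by
        have he : (L:ℝ) * ((1 / (2 * (L:ℝ) ^ 2)) * C) = C / (2 * (L:ℝ)) := by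
          field_simp
        rw [he]
        gcongr
        linarith

theorem arctan_enhanced_midpoint_tendsto (x : ℝ) (M : ℕ) :
    Tendsto
      (fun L : ℕ =>
        ∑ ℓ ∈ Finset.Icc 1 L, ∑ m ∈ Finset.range (M + 1),
          (((-1 : ℝ) ^ m + 1) / ((2 * L : ℝ) ^ (m + 1) * ((m + 1).factorial : ℝ))) *
            iteratedDeriv m (fun t : ℝ => x / (1 + x ^ 2 * t ^ 2))
              ((2 * (ℓ : ℝ) - 1) / (2 * L)))
      atTop (nhds (Real.arctan x)) := by
  have hswap : (fun L : ℕ =>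
        ∑ ℓ ∈ Finset.Icc 1 L, ∑ m ∈ Finset.range (M + 1),
          (((-1 : ℝ) ^ m + 1) / ((2 * L : ℝ) ^ (m + 1) * ((m + 1).factorial : ℝ))) *
            iteratedDeriv m (fun t : ℝ => x / (1 + x ^ 2 * t ^ 2))
              ((2 * (ℓ : ℝ) - 1) / (2 * L)))
      = (fun L : ℕ =>
        ∑ m ∈ Finset.range (M + 1), ∑ ℓ ∈ Finset.Icc 1 L,
          (((-1 : ℝ) ^ m + 1) / ((2 * L : ℝ) ^ (m + 1) * ((m + 1).factorial : ℝ))) *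
            iteratedDeriv m (fun t : ℝ => x / (1 + x ^ 2 * t ^ 2))
              ((2 * (ℓ : ℝ) - 1) / (2 * L))) := funext fun L => Finset.sum_comm
  rw [hswap]
  have hsum : Real.arctan x
      = ∑ m ∈ Finset.range (M + 1), (if m = 0 then Real.arctan x else 0) := by simp
  rw [hsum]
  apply tendsto_finset_sum
  intro m hm
  rcases Nat.eq_zero_or_pos m with h0 | h1
  · subst h0
    rw [if_pos rfl]
    have heq : (fun L : ℕ => ∑ ℓ ∈ Finset.Icc 1 L,
          (((-1 : ℝ) ^ 0 + 1) / ((2 * L : ℝ) ^ (0 + 1) * ((0 + 1).factorial : ℝ))) *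
            iteratedDeriv 0 (fun t : ℝ => x / (1 + x ^ 2 * t ^ 2))
              ((2 * (ℓ : ℝ) - 1) / (2 * L)))
        = (fun L : ℕ => ∑ ℓ ∈ Finset.Icc 1 L,
            (1 / (L:ℝ)) * (x / (1 + x ^ 2 * ((2 * (ℓ:ℝ) - 1) / (2 * L)) ^ 2))) := by
      funext L
      apply Finset.sum_congr rfl
      intro ℓ _
      rw [iteratedDeriv_zero]
      norm_num
      rw [div_mul_eq_div_div]
      norm_num [one_div]
    rw [heq]
    exact lemmaA x
  · rw [if_neg (by omega)]
    exact lemmaB x m h1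
end

section
/- For every real number x, arctan(x) equals the limit as L → ∞ (L a positive integer) of Σ_{ℓ=1}^{L} [ 4Lx / (4L² + (2ℓ−1)² x²) − 4Lx³ (4L² − 3(2ℓ−1)² x²) / (3 (4L² + (2ℓ−1)² x²)³) ]. -/
set_option maxHeartbeats 1000000
open Filter intervalIntegral

lemma contf (x : ℝ) : Continuous (fun t : ℝ => x / (1 + t^2 * x^2)) := by
  apply continuous_const.div (by continuity)
  intro t; positivity

lemma keylem (x : ℝ) (L k : ℕ) (hk : k < L) :
    |(4 * (L : ℝ) * x / (4 * (L : ℝ) ^ 2 + (2 * ((k:ℝ)+1) - 1) ^ 2 * x ^ 2)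
        - 4 * (L : ℝ) * x ^ 3 *
            (4 * (L : ℝ) ^ 2 - 3 * (2 * ((k:ℝ)+1) - 1) ^ 2 * x ^ 2) /
          (3 * (4 * (L : ℝ) ^ 2 + (2 * ((k:ℝ)+1) - 1) ^ 2 * x ^ 2) ^ 3))
      - ∫ t in ((k:ℝ)/L)..(((k:ℝ)+1)/L), x / (1 + t^2 * x^2)|
    ≤ |x|^3/(L:ℝ)^2 + |x|^3/(4*(L:ℝ)^3) := by
  have hL : (0:ℝ) < L := by exact_mod_cast Nat.pos_of_ne_zero (by omega)
  set Lr : ℝ := (L:ℝ) with hLr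
  have hkL : (k:ℝ) + 1 ≤ Lr := by
    rw [hLr]; exact_mod_cast Nat.succ_le_of_lt hk
  have hk0 : (0:ℝ) ≤ k := Nat.cast_nonneg k
  set w : ℝ := 2 * ((k:ℝ)+1) - 1 with hw
  set m : ℝ := w / (2*Lr) with hm
  set D : ℝ := 4 * Lr ^ 2 + w ^ 2 * x ^ 2 with hD
  have hw0 : 0 < w := by simp only [hw]; linarith
  have hDpos : 0 < D := by simp only [hD]; positivity
  have hD4 : 4 * Lr ^ 2 ≤ D := by simp only [hD]; nlinarith [sq_nonneg (w*x)]
  have hT1 : 4 * Lr * x / D = (x / (1 + m^2 * x^2)) * (1/Lr) := by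
    have h1 : 0 < 1 + m^2 * x^2 := by positivity
    rw [hm, hD]
    field_simp
    ring
  have hT2 : |4 * Lr * x ^ 3 * (4 * Lr ^ 2 - 3 * w ^ 2 * x ^ 2) / (3 * D ^ 3)|
      ≤ |x|^3/(4*Lr^3) := by
    rw [abs_div, abs_of_pos (by positivity : (0:ℝ) < 3 * D ^ 3),
      div_le_div_iff₀ (by positivity) (by positivity)]
    have h1 : |4 * Lr * x ^ 3 * (4 * Lr ^ 2 - 3 * w ^ 2 * x ^ 2)|
        = 4 * Lr * |x|^3 * |4 * Lr ^ 2 - 3 * w ^ 2 * x ^ 2| := by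
      rw [abs_mul, abs_mul, abs_pow]
      rw [abs_of_pos (by positivity : (0:ℝ) < 4 * Lr)]
    rw [h1]
    have h2 : |4 * Lr ^ 2 - 3 * w ^ 2 * x ^ 2| ≤ 3 * D := by
      rw [abs_le]
      constructor <;> simp only [hD] <;> nlinarith [sq_nonneg (w*x), sq_nonneg Lr]
    have h3 : 16 * Lr^4 ≤ D^2 := by nlinarith
    have h4 : 4 * Lr * |4 * Lr ^ 2 - 3 * w ^ 2 * x ^ 2| * (4*Lr^3) ≤ 3 * D^3 := by
      nlinarith [abs_nonneg (4 * Lr ^ 2 - 3 * w ^ 2 * x ^ 2),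
        mul_le_mul h3 h2 (abs_nonneg _) (by positivity : (0:ℝ) ≤ D^2)]
    calc 4 * Lr * |x|^3 * |4 * Lr ^ 2 - 3 * w ^ 2 * x ^ 2| * (4 * Lr ^ 3)
        = |x|^3 * (4 * Lr * |4 * Lr ^ 2 - 3 * w ^ 2 * x ^ 2| * (4*Lr^3)) := by ring
      _ ≤ |x|^3 * (3 * D^3) := mul_le_mul_of_nonneg_left h4 (by positivity)
  have hle : ((k:ℝ)/Lr) ≤ (((k:ℝ)+1)/Lr) := by gcongr; linarith
  have hint : |(x / (1 + m^2 * x^2)) * (1/Lr)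
      - ∫ t in ((k:ℝ)/Lr)..(((k:ℝ)+1)/Lr), x / (1 + t^2 * x^2)| ≤ |x|^3/Lr^2 := by
    have hii : IntervalIntegrable (fun t : ℝ => x / (1 + t^2 * x^2)) MeasureTheory.volume ((k:ℝ)/Lr) (((k:ℝ)+1)/Lr) :=
      (contf x).intervalIntegrable _ _
    have hconst : (x / (1 + m^2 * x^2)) * (1/Lr)
        = ∫ t in ((k:ℝ)/Lr)..(((k:ℝ)+1)/Lr), (x / (1 + m^2 * x^2)) := by
      rw [intervalIntegral.integral_const, smul_eq_mul, mul_comm]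
      congr 1
      field_simp
      ring
    rw [hconst, ← intervalIntegral.integral_sub intervalIntegrable_const hii]
    have hbnd : ∀ t ∈ Set.uIoc ((k:ℝ)/Lr) (((k:ℝ)+1)/Lr),
        ‖x / (1 + m^2 * x^2) - x / (1 + t^2 * x^2)‖ ≤ |x|^3/Lr := by
      intro t ht
      rw [Set.uIoc_of_le hle] at ht
      obtain ⟨ht1, ht2⟩ := ht
      have htm : 0 < 1 + t^2 * x^2 := by positivity
      have hmm : 0 < 1 + m^2 * x^2 := by positivity
      have heq : x / (1 + m^2 * x^2) - x / (1 + t^2 * x^2)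
          = x^3 * ((t - m) * (t + m)) / ((1 + m^2*x^2) * (1 + t^2*x^2)) := by
        field_simp
        ring
      rw [heq, Real.norm_eq_abs, abs_div, abs_mul, abs_mul, abs_pow]
      have hm1 : m - (k:ℝ)/Lr = 1/(2*Lr) := by
        rw [hm, hw]; field_simp; ring
      have hm2 : ((k:ℝ)+1)/Lr - m = 1/(2*Lr) := by
        rw [hm, hw]; field_simp; ring
      have htm1 : |t - m| ≤ 1/(2*Lr) := by
        rw [abs_le]; constructor <;> linarith
      have hmle : m ≤ 1 := by
        have : m ≤ ((k:ℝ)+1)/Lr := by linarith [hm2, (by positivity : (0:ℝ) < 1/(2*Lr))]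
        have h1 : ((k:ℝ)+1)/Lr ≤ 1 := by
          rw [div_le_one hL]; exact hkL
        linarith
      have htle : t ≤ 1 := by
        have h1 : ((k:ℝ)+1)/Lr ≤ 1 := by rw [div_le_one hL]; exact hkL
        linarith
      have hm0 : 0 ≤ m := le_of_lt (by rw [hm]; positivity)
      have ht0 : 0 ≤ t := le_trans (by positivity : (0:ℝ) ≤ (k:ℝ)/Lr) (le_of_lt ht1)
      have htpm : |t + m| ≤ 2 := by rw [abs_le]; constructor <;> linarith
      have hden : (1:ℝ) ≤ |(1 + m^2*x^2) * (1 + t^2*x^2)| := by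
        rw [abs_of_pos (by positivity)]
        nlinarith [mul_nonneg (mul_nonneg (sq_nonneg m) (sq_nonneg x)) (mul_nonneg (sq_nonneg t) (sq_nonneg x)), mul_nonneg (sq_nonneg m) (sq_nonneg x), mul_nonneg (sq_nonneg t) (sq_nonneg x)]
      calc |x|^3 * (|t - m| * |t + m|) / |(1 + m^2*x^2) * (1 + t^2*x^2)|
          ≤ |x|^3 * (|t - m| * |t + m|) / 1 := by
            apply div_le_div_of_nonneg_left ?_ ?_ hden
            · positivity
            · norm_num
        _ = |x|^3 * (|t - m| * |t + m|) := by rw [div_one]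
        _ ≤ |x|^3 * (1/(2*Lr) * 2) := by
            apply mul_le_mul_of_nonneg_left ?_ (by positivity)
            exact mul_le_mul htm1 htpm (abs_nonneg _) (by positivity)
        _ = |x|^3/Lr := by field_simp
    have hnn := intervalIntegral.norm_integral_le_of_norm_le_const hbnd
    rw [Real.norm_eq_abs] at hnn
    have hba : |((k:ℝ)+1)/Lr - (k:ℝ)/Lr| = 1/Lr := by
      rw [abs_of_nonneg (by linarith)]
      field_simp
      ring
    rw [hba] at hnn
    refine hnn.trans (le_of_eq ?_)
    rw [div_mul_div_comm, mul_one, ← pow_two]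
  calc |(4 * Lr * x / D - 4 * Lr * x ^ 3 * (4 * Lr ^ 2 - 3 * w ^ 2 * x ^ 2) / (3 * D ^ 3))
        - ∫ t in ((k:ℝ)/Lr)..(((k:ℝ)+1)/Lr), x / (1 + t^2 * x^2)|
      ≤ |4 * Lr * x / D - ∫ t in ((k:ℝ)/Lr)..(((k:ℝ)+1)/Lr), x / (1 + t^2 * x^2)|
        + |4 * Lr * x ^ 3 * (4 * Lr ^ 2 - 3 * w ^ 2 * x ^ 2) / (3 * D ^ 3)| := by
        have heq2 : (4 * Lr * x / D - 4 * Lr * x ^ 3 * (4 * Lr ^ 2 - 3 * w ^ 2 * x ^ 2) / (3 * D ^ 3))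
            - (∫ t in ((k:ℝ)/Lr)..(((k:ℝ)+1)/Lr), x / (1 + t^2 * x^2))
            = (4 * Lr * x / D - ∫ t in ((k:ℝ)/Lr)..(((k:ℝ)+1)/Lr), x / (1 + t^2 * x^2))
              - 4 * Lr * x ^ 3 * (4 * Lr ^ 2 - 3 * w ^ 2 * x ^ 2) / (3 * D ^ 3) := by ring
        rw [heq2]
        exact abs_sub _ _
    _ ≤ |x|^3/Lr^2 + |x|^3/(4*Lr^3) := by
        apply add_le_add ?_ hT2
        rw [hT1]; exact hint

lemma integf (x a b : ℝ) :
    ∫ t in a..b, x / (1 + t^2 * x^2) = Real.arctan (b*x) - Real.arctan (a*x) := by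
  apply intervalIntegral.integral_eq_sub_of_hasDerivAt
  · intro t ht
    have h := (Real.hasDerivAt_arctan (t*x)).comp t (hasDerivAt_mul_const x)
    rw [show x / (1 + t^2 * x^2) = 1 / (1 + (t*x)^2) * x by rw [mul_pow]; ring]
    exact h
  · exact (contf x).intervalIntegrable a b

theorem arctan_enhanced_midpoint_M2_limit (x : ℝ) :
    Tendsto
      (fun L : ℕ =>
        ∑ ℓ ∈ Finset.Icc 1 L,
          (4 * (L : ℝ) * x / (4 * (L : ℝ) ^ 2 + (2 * (ℓ : ℝ) - 1) ^ 2 * x ^ 2)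
            - 4 * (L : ℝ) * x ^ 3 *
                (4 * (L : ℝ) ^ 2 - 3 * (2 * (ℓ : ℝ) - 1) ^ 2 * x ^ 2) /
              (3 * (4 * (L : ℝ) ^ 2 + (2 * (ℓ : ℝ) - 1) ^ 2 * x ^ 2) ^ 3)))
      atTop (nhds (Real.arctan x)) := by
  rw [← tendsto_sub_nhds_zero_iff, tendsto_zero_iff_abs_tendsto_zero]
  apply squeeze_zero' (g := fun L : ℕ => 2 * |x|^3 / (L:ℝ))
    (Filter.Eventually.of_forall fun L => abs_nonneg _) ?_ ?_
  · filter_upwards [eventually_ge_atTop 1] with L hL1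
    have hL0 : (0:ℝ) < L := by exact_mod_cast hL1
    set A : ℝ := |x|^3 with hA
    have hA0 : 0 ≤ A := by rw [hA]; positivity
    -- arctan as sum of integrals
    have h01 : Real.arctan x
        = ∑ k ∈ Finset.range L, ∫ t in ((k:ℝ)/(L:ℝ))..(((k:ℝ)+1)/(L:ℝ)), x / (1 + t^2 * x^2) := by
      have hadj := intervalIntegral.sum_integral_adjacent_intervals
        (μ := MeasureTheory.volume) (a := fun k : ℕ => (k:ℝ)/(L:ℝ)) (n := L)
        (fun k _ => (contf x).intervalIntegrable _ _)
      push_cast at hadj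
      rw [zero_div, div_self (ne_of_gt hL0)] at hadj
      rw [hadj, integf]
      norm_num
    -- reindex the Icc sum
    have hre : (∑ ℓ ∈ Finset.Icc 1 L,
          (4 * (L : ℝ) * x / (4 * (L : ℝ) ^ 2 + (2 * (ℓ : ℝ) - 1) ^ 2 * x ^ 2)
            - 4 * (L : ℝ) * x ^ 3 *
                (4 * (L : ℝ) ^ 2 - 3 * (2 * (ℓ : ℝ) - 1) ^ 2 * x ^ 2) /
              (3 * (4 * (L : ℝ) ^ 2 + (2 * (ℓ : ℝ) - 1) ^ 2 * x ^ 2) ^ 3)))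
        = ∑ k ∈ Finset.range L,
          (4 * (L : ℝ) * x / (4 * (L : ℝ) ^ 2 + (2 * ((k:ℝ)+1) - 1) ^ 2 * x ^ 2)
            - 4 * (L : ℝ) * x ^ 3 *
                (4 * (L : ℝ) ^ 2 - 3 * (2 * ((k:ℝ)+1) - 1) ^ 2 * x ^ 2) /
              (3 * (4 * (L : ℝ) ^ 2 + (2 * ((k:ℝ)+1) - 1) ^ 2 * x ^ 2) ^ 3)) := by
      rw [← Finset.Ico_add_one_right_eq_Icc, Finset.sum_Ico_eq_sum_range]
      apply Finset.sum_congr rfl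
      intro k _
      push_cast
      ring
    rw [hre, h01, ← Finset.sum_sub_distrib]
    calc |∑ k ∈ Finset.range L, _|
        ≤ ∑ k ∈ Finset.range L, |(4 * (L : ℝ) * x / (4 * (L : ℝ) ^ 2 + (2 * ((k:ℝ)+1) - 1) ^ 2 * x ^ 2)
            - 4 * (L : ℝ) * x ^ 3 *
                (4 * (L : ℝ) ^ 2 - 3 * (2 * ((k:ℝ)+1) - 1) ^ 2 * x ^ 2) /
              (3 * (4 * (L : ℝ) ^ 2 + (2 * ((k:ℝ)+1) - 1) ^ 2 * x ^ 2) ^ 3))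
            - ∫ t in ((k:ℝ)/(L:ℝ))..(((k:ℝ)+1)/(L:ℝ)), x / (1 + t^2 * x^2)| :=
          Finset.abs_sum_le_sum_abs _ _
      _ ≤ ∑ k ∈ Finset.range L, (A/(L:ℝ)^2 + A/(4*(L:ℝ)^3)) := by
          apply Finset.sum_le_sum
          intro k hk
          exact keylem x L k (Finset.mem_range.mp hk)
      _ = (L:ℝ) * (A/(L:ℝ)^2 + A/(4*(L:ℝ)^3)) := by
          rw [Finset.sum_const, Finset.card_range, nsmul_eq_mul]
      _ = A/(L:ℝ) + A/(4*(L:ℝ)^2) := by field_simp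
      _ ≤ 2 * A / (L:ℝ) := by
          have hLr1 : (1:ℝ) ≤ (L:ℝ) := by exact_mod_cast hL1
          have h1 : A/(4*(L:ℝ)^2) ≤ A/(L:ℝ) :=
            div_le_div_of_nonneg_left hA0 hL0 (by nlinarith)
          have h2 : 2 * A / (L:ℝ) = A/(L:ℝ) + A/(L:ℝ) := by ring
          linarith
  · exact tendsto_const_nhds.div_atTop tendsto_natCast_atTop_atTop
end

section
/- For every real number x, arctan(x) equals the limit as L → ∞ (L a positive integer) of Σ_{ℓ=1}^{L} [ 4Lx / (4L² + (2ℓ−1)² x²) − 4Lx³ (4L² − 3(2ℓ−1)² x²) / (3 (4L² + (2ℓ−1)² x²)³) + 4Lx⁵ (16L⁴ − 40(2ℓ−1)² L² x² + 5(2ℓ−1)⁴ x⁴) / (5 (4L² + (2ℓ−1)² x²)⁵) − 4Lx⁷ (64L⁶ − 336(2ℓ−1)² L⁴ x² + 140(2ℓ−1)⁴ L² x⁴ − 7(2ℓ−1)⁶ x⁶) / (7 (4L² + (2ℓ−1)² x²)⁷) ]. -/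
set_option maxHeartbeats 1000000

open Filter

private lemma arctanAux_abs_odd_pow (x : ℝ) (j : ℕ) (hj : Even j) :
    |x ^ (j + 1)| = x ^ j * |x| := by
  rw [pow_succ, abs_mul, abs_of_nonneg (hj.pow_nonneg x)]

private lemma arctanAux_corr_gen (lr D q B y ay N : ℝ) (e j : ℕ) (hlr : 1 ≤ lr) (hD : 0 < D)
    (hq : 0 < q) (hy : |y| = ay) (hN : |N| ≤ B * D ^ j)
    (hkey : 4 * lr ^ 3 * (B * D ^ j) ≤ q * D ^ e) :
    |4 * lr * y * N / (q * D ^ e)| ≤ ay / lr ^ 2 := by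
  have hlr0 : (0:ℝ) < lr := by linarith
  have hay : 0 ≤ ay := hy ▸ abs_nonneg y
  rw [abs_div, abs_of_pos (show (0:ℝ) < q * D ^ e by positivity),
    div_le_div_iff₀ (by positivity) (by positivity)]
  have h1 : |4 * lr * y * N| = 4 * lr * ay * |N| := by
    rw [abs_mul, abs_mul, abs_of_pos (by positivity : (0:ℝ) < 4 * lr), hy]
  calc |4 * lr * y * N| * lr ^ 2 = 4 * lr ^ 3 * ay * |N| := by rw [h1]; ring
    _ ≤ 4 * lr ^ 3 * ay * (B * D ^ j) := by
        apply mul_le_mul_of_nonneg_left hN (by positivity)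
    _ = ay * (4 * lr ^ 3 * (B * D ^ j)) := by ring
    _ ≤ ay * (q * D ^ e) := mul_le_mul_of_nonneg_left hkey hay

private lemma arctanAux_main_term (x lr n : ℝ) (hlr : 1 ≤ lr) (hn1 : 1 ≤ n) (hnL : n ≤ lr) :
    |4 * lr * x / (4 * lr ^ 2 + (2 * n - 1) ^ 2 * x ^ 2)
      - (Real.arctan (n / lr * x) - Real.arctan ((n - 1) / lr * x))| ≤ 2 * x ^ 2 * |x| / lr ^ 2 := by
  have hlr0 : (0:ℝ) < lr := by linarith
  set m : ℝ := (2 * n - 1) / (2 * lr) with hm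
  set a : ℝ := (n - 1) / lr with ha
  set b : ℝ := n / lr with hb
  have hm1 : (0:ℝ) < 1 + m ^ 2 * x ^ 2 := by positivity
  have hD : (0:ℝ) < 4 * lr ^ 2 + (2 * n - 1) ^ 2 * x ^ 2 := by positivity
  have hb_sub_a : b - a = 1 / lr := by rw [hb, ha]; field_simp; ring
  have hab : a ≤ b := by rw [ha, hb]; gcongr; linarith
  have ha0 : 0 ≤ a := by rw [ha]; apply div_nonneg (by linarith) hlr0.le
  have hb1 : b ≤ 1 := by rw [hb]; exact (div_le_one hlr0).mpr hnL
  have ham : a ≤ m := by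
    rw [ha, hm, div_le_div_iff₀ hlr0 (by linarith)]; nlinarith
  have hmb : m ≤ b := by
    rw [hb, hm, div_le_div_iff₀ (by linarith) hlr0]; nlinarith
  have hmain : 4 * lr * x / (4 * lr ^ 2 + (2 * n - 1) ^ 2 * x ^ 2)
      = x / (1 + m ^ 2 * x ^ 2) * (b - a) := by
    rw [hb_sub_a, hm]
    rw [div_mul_div_comm]
    rw [div_eq_div_iff (by positivity) (by positivity)]
    field_simp
    ring
  set c : ℝ := x / (1 + m ^ 2 * x ^ 2) with hc
  set G : ℝ → ℝ := fun t => Real.arctan (t * x) - c * t with hG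
  have hderiv : ∀ t ∈ Set.Icc a b, HasDerivWithinAt G (x / (1 + t ^ 2 * x ^ 2) - c) (Set.Icc a b) t := by
    intro t ht
    have h1 : HasDerivAt (fun t : ℝ => Real.arctan (t * x)) (1 / (1 + (t * x) ^ 2) * x) t := by
      simpa [Function.comp_def] using (Real.hasDerivAt_arctan (t * x)).comp t ((hasDerivAt_id t).mul_const x)
    have h2 : HasDerivAt G (1 / (1 + (t * x) ^ 2) * x - c * 1) t :=
      h1.sub ((hasDerivAt_id t).const_mul c)
    have h3 : 1 / (1 + (t * x) ^ 2) * x - c * 1 = x / (1 + t ^ 2 * x ^ 2) - c := by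
      rw [mul_pow]; ring
    rw [h3] at h2
    exact h2.hasDerivWithinAt
  have hbound : ∀ t ∈ Set.Icc a b, ‖x / (1 + t ^ 2 * x ^ 2) - c‖ ≤ 2 * x ^ 2 * |x| / lr := by
    intro t ht
    obtain ⟨hta, htb⟩ := ht
    have ht2 : (0:ℝ) < 1 + t ^ 2 * x ^ 2 := by positivity
    have hid : x / (1 + t ^ 2 * x ^ 2) - c
        = x ^ 3 * (m ^ 2 - t ^ 2) / ((1 + t ^ 2 * x ^ 2) * (1 + m ^ 2 * x ^ 2)) := by
      rw [hc]; field_simp; ring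
    rw [hid, Real.norm_eq_abs, abs_div]
    have hden : (1:ℝ) ≤ |(1 + t ^ 2 * x ^ 2) * (1 + m ^ 2 * x ^ 2)| := by
      rw [abs_of_pos (by positivity)]
      have hA : 0 ≤ t ^ 2 * x ^ 2 := by positivity
      have hB : 0 ≤ m ^ 2 * x ^ 2 := by positivity
      nlinarith
    calc |x ^ 3 * (m ^ 2 - t ^ 2)| / |(1 + t ^ 2 * x ^ 2) * (1 + m ^ 2 * x ^ 2)|
        ≤ |x ^ 3 * (m ^ 2 - t ^ 2)| := div_le_self (abs_nonneg _) hden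
      _ = |x ^ 3| * |m ^ 2 - t ^ 2| := abs_mul _ _
      _ ≤ (x ^ 2 * |x|) * (2 / lr) := by
          apply mul_le_mul ?_ ?_ (abs_nonneg _) (by positivity)
          · rw [pow_succ, abs_mul, abs_pow, sq_abs]
          · have h1 : |m ^ 2 - t ^ 2| = |m - t| * |m + t| := by
              rw [← abs_mul]; ring_nf
            rw [h1]
            have h2 : |m - t| ≤ 1 / lr := by
              rw [abs_le]; constructor <;> [linarith [hb_sub_a]; linarith [hb_sub_a]]
            have h3 : |m + t| ≤ 2 := by
              rw [abs_le]; constructor <;> linarith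
            calc |m - t| * |m + t| ≤ (1 / lr) * 2 :=
                  mul_le_mul h2 h3 (abs_nonneg _) (by positivity)
              _ = 2 / lr := by ring
      _ = 2 * x ^ 2 * |x| / lr := by ring
  have key := Convex.norm_image_sub_le_of_norm_hasDerivWithin_le hderiv hbound
    (convex_Icc a b) (Set.left_mem_Icc.mpr hab) (Set.right_mem_Icc.mpr hab)
  rw [Real.norm_eq_abs, Real.norm_eq_abs] at key
  have hGba : G b - G a = (Real.arctan (b * x) - Real.arctan (a * x)) - c * (b - a) := by
    rw [hG]; ring
  rw [hGba] at key
  rw [hmain]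
  rw [abs_sub_comm]
  calc |Real.arctan (b * x) - Real.arctan (a * x) - c * (b - a)|
      ≤ 2 * x ^ 2 * |x| / lr * |b - a| := key
    _ = 2 * x ^ 2 * |x| / lr ^ 2 := by
        rw [hb_sub_a, abs_of_pos (show (0:ℝ) < 1 / lr by positivity)]
        rw [div_mul_div_comm]
        congr 1 <;> ring


private lemma arctanAux_per_term (x lr n : ℝ) (hlr : 1 ≤ lr) (hn1 : 1 ≤ n) (hnL : n ≤ lr) :
    |(4 * lr * x / (4 * lr ^ 2 + (2 * n - 1) ^ 2 * x ^ 2)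
      - 4 * lr * x ^ 3 * (4 * lr ^ 2 - 3 * (2 * n - 1) ^ 2 * x ^ 2) /
        (3 * (4 * lr ^ 2 + (2 * n - 1) ^ 2 * x ^ 2) ^ 3)
      + 4 * lr * x ^ 5 * (16 * lr ^ 4 - 40 * (2 * n - 1) ^ 2 * lr ^ 2 * x ^ 2
          + 5 * (2 * n - 1) ^ 4 * x ^ 4) /
        (5 * (4 * lr ^ 2 + (2 * n - 1) ^ 2 * x ^ 2) ^ 5)
      - 4 * lr * x ^ 7 * (64 * lr ^ 6 - 336 * (2 * n - 1) ^ 2 * lr ^ 4 * x ^ 2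
          + 140 * (2 * n - 1) ^ 4 * lr ^ 2 * x ^ 4 - 7 * (2 * n - 1) ^ 6 * x ^ 6) /
        (7 * (4 * lr ^ 2 + (2 * n - 1) ^ 2 * x ^ 2) ^ 7))
      - (Real.arctan (n / lr * x) - Real.arctan ((n - 1) / lr * x))|
      ≤ (3 * x ^ 2 + x ^ 4 + x ^ 6) * |x| / lr ^ 2 := by
  have hlr0 : (0:ℝ) < lr := by linarith
  set u : ℝ := (2 * n - 1) ^ 2 * x ^ 2 with hu
  have hu0 : 0 ≤ u := by positivity
  set D : ℝ := 4 * lr ^ 2 + u with hD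
  have hD0 : (0:ℝ) < D := by positivity
  have hD4 : 4 * lr ^ 2 ≤ D := by linarith
  have hu24 : (2 * n - 1) ^ 4 * x ^ 4 = u ^ 2 := by rw [hu]; ring
  have hu36 : (2 * n - 1) ^ 6 * x ^ 6 = u ^ 3 := by rw [hu]; ring
  -- term 2
  have h2 : |4 * lr * x ^ 3 * (4 * lr ^ 2 - 3 * u) / (3 * D ^ 3)| ≤ x ^ 2 * |x| / lr ^ 2 := by
    apply arctanAux_corr_gen lr D 3 3 (x ^ 3) (x ^ 2 * |x|) _ 3 1 hlr hD0 (by norm_num)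
        (arctanAux_abs_odd_pow x 2 (by norm_num))
    · rw [abs_le]; constructor <;> (rw [hD]; ring_nf; nlinarith [hu0, sq_nonneg lr])
    · have h2a : (4 * lr ^ 2) ^ 2 ≤ D ^ 2 := pow_le_pow_left₀ (by positivity) hD4 2
      have h2b : 4 * lr ^ 3 ≤ D ^ 2 := by
        have := pow_le_pow_right₀ hlr (show 3 ≤ 4 by norm_num)
        linarith [h2a, pow_nonneg hlr0.le 4]
      nlinarith [mul_le_mul_of_nonneg_left h2b (show (0:ℝ) ≤ 3 * D by positivity)]
  -- term 3
  have h3 : |4 * lr * x ^ 5 * (16 * lr ^ 4 - 40 * u * lr ^ 2 + 5 * u ^ 2) / (5 * D ^ 5)|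
      ≤ x ^ 4 * |x| / lr ^ 2 := by
    apply arctanAux_corr_gen lr D 5 5 (x ^ 5) (x ^ 4 * |x|) _ 5 2 hlr hD0 (by norm_num)
        (arctanAux_abs_odd_pow x 4 ⟨2, rfl⟩)
    · rw [abs_le]
      have m1 : 0 ≤ u ^ 2 := by positivity
      have m2 : 0 ≤ u * lr ^ 2 := by positivity
      have m3 : 0 ≤ lr ^ 4 := by positivity
      constructor <;> (rw [hD]; nlinarith [m1, m2, m3])
    · have h3a : (4 * lr ^ 2) ^ 3 ≤ D ^ 3 := pow_le_pow_left₀ (by positivity) hD4 3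
      have h3b : 4 * lr ^ 3 ≤ D ^ 3 := by
        have := pow_le_pow_right₀ hlr (show 3 ≤ 6 by norm_num)
        linarith [h3a, pow_nonneg hlr0.le 6]
      nlinarith [mul_le_mul_of_nonneg_left h3b (show (0:ℝ) ≤ 5 * D ^ 2 by positivity)]
  -- term 4
  have h4 : |4 * lr * x ^ 7 * (64 * lr ^ 6 - 336 * u * lr ^ 4 + 140 * u ^ 2 * lr ^ 2 - 7 * u ^ 3) /
      (7 * D ^ 7)| ≤ x ^ 6 * |x| / lr ^ 2 := by
    apply arctanAux_corr_gen lr D 7 12 (x ^ 7) (x ^ 6 * |x|) _ 7 3 hlr hD0 (by norm_num)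
        (arctanAux_abs_odd_pow x 6 ⟨3, rfl⟩)
    · rw [abs_le]
      have m1 : 0 ≤ u ^ 2 * lr ^ 2 := by positivity
      have m2 : 0 ≤ u * lr ^ 4 := by positivity
      have m3 : 0 ≤ u ^ 3 := by positivity
      have m4 : 0 ≤ lr ^ 6 := by positivity
      constructor <;> (rw [hD]; nlinarith [m1, m2, m3, m4])
    · have h4a : (4 * lr ^ 2) ^ 4 ≤ D ^ 4 := pow_le_pow_left₀ (by positivity) hD4 4
      have h4b : 48 * lr ^ 3 ≤ 7 * D ^ 4 := by
        have := pow_le_pow_right₀ hlr (show 3 ≤ 8 by norm_num)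
        linarith [h4a, pow_nonneg hlr0.le 8]
      nlinarith [mul_le_mul_of_nonneg_left h4b (show (0:ℝ) ≤ D ^ 3 by positivity)]
  have h1 := arctanAux_main_term x lr n hlr hn1 hnL
  -- combine
  set t1 : ℝ := 4 * lr * x / D with ht1
  set t2 : ℝ := 4 * lr * x ^ 3 * (4 * lr ^ 2 - 3 * u) / (3 * D ^ 3) with ht2
  set t3 : ℝ := 4 * lr * x ^ 5 * (16 * lr ^ 4 - 40 * u * lr ^ 2 + 5 * u ^ 2) / (5 * D ^ 5) with ht3
  set t4 : ℝ := 4 * lr * x ^ 7 *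
      (64 * lr ^ 6 - 336 * u * lr ^ 4 + 140 * u ^ 2 * lr ^ 2 - 7 * u ^ 3) / (7 * D ^ 7) with ht4
  set dd : ℝ := Real.arctan (n / lr * x) - Real.arctan ((n - 1) / lr * x) with hdd
  have hre : (4 * lr * x / (4 * lr ^ 2 + (2 * n - 1) ^ 2 * x ^ 2)
      - 4 * lr * x ^ 3 * (4 * lr ^ 2 - 3 * (2 * n - 1) ^ 2 * x ^ 2) /
        (3 * (4 * lr ^ 2 + (2 * n - 1) ^ 2 * x ^ 2) ^ 3)
      + 4 * lr * x ^ 5 * (16 * lr ^ 4 - 40 * (2 * n - 1) ^ 2 * lr ^ 2 * x ^ 2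
          + 5 * (2 * n - 1) ^ 4 * x ^ 4) /
        (5 * (4 * lr ^ 2 + (2 * n - 1) ^ 2 * x ^ 2) ^ 5)
      - 4 * lr * x ^ 7 * (64 * lr ^ 6 - 336 * (2 * n - 1) ^ 2 * lr ^ 4 * x ^ 2
          + 140 * (2 * n - 1) ^ 4 * lr ^ 2 * x ^ 4 - 7 * (2 * n - 1) ^ 6 * x ^ 6) /
        (7 * (4 * lr ^ 2 + (2 * n - 1) ^ 2 * x ^ 2) ^ 7))
      - dd = (t1 - dd) + (-t2) + t3 + (-t4) := by
    rw [ht1, ht2, ht3, ht4, hdd, ← hdd, hD, hu]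
    ring
  rw [hre]
  have e1 := abs_add_le ((t1 - dd) + (-t2) + t3) (-t4)
  have e2 := abs_add_le ((t1 - dd) + (-t2)) t3
  have e3 := abs_add_le (t1 - dd) (-t2)
  rw [abs_neg] at e1 e3
  have hub : |t1 - dd| + |t2| + |t3| + |t4|
      ≤ (3 * x ^ 2 + x ^ 4 + x ^ 6) * |x| / lr ^ 2 := by
    have : (3 * x ^ 2 + x ^ 4 + x ^ 6) * |x| / lr ^ 2
        = 2 * x ^ 2 * |x| / lr ^ 2 + x ^ 2 * |x| / lr ^ 2 + x ^ 4 * |x| / lr ^ 2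
          + x ^ 6 * |x| / lr ^ 2 := by ring
    rw [this]
    gcongr
  linarith

theorem arctan_enhanced_midpoint_M6_limit (x : ℝ) :
    Tendsto
      (fun L : ℕ =>
        ∑ ℓ ∈ Finset.Icc 1 L,
          (4 * (L : ℝ) * x / (4 * (L : ℝ) ^ 2 + (2 * (ℓ : ℝ) - 1) ^ 2 * x ^ 2)
            - 4 * (L : ℝ) * x ^ 3 *
                (4 * (L : ℝ) ^ 2 - 3 * (2 * (ℓ : ℝ) - 1) ^ 2 * x ^ 2) /
              (3 * (4 * (L : ℝ) ^ 2 + (2 * (ℓ : ℝ) - 1) ^ 2 * x ^ 2) ^ 3)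
            + 4 * (L : ℝ) * x ^ 5 *
                (16 * (L : ℝ) ^ 4 - 40 * (2 * (ℓ : ℝ) - 1) ^ 2 * (L : ℝ) ^ 2 * x ^ 2
                  + 5 * (2 * (ℓ : ℝ) - 1) ^ 4 * x ^ 4) /
              (5 * (4 * (L : ℝ) ^ 2 + (2 * (ℓ : ℝ) - 1) ^ 2 * x ^ 2) ^ 5)
            - 4 * (L : ℝ) * x ^ 7 *
                (64 * (L : ℝ) ^ 6 - 336 * (2 * (ℓ : ℝ) - 1) ^ 2 * (L : ℝ) ^ 4 * x ^ 2
                  + 140 * (2 * (ℓ : ℝ) - 1) ^ 4 * (L : ℝ) ^ 2 * x ^ 4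
                  - 7 * (2 * (ℓ : ℝ) - 1) ^ 6 * x ^ 6) /
              (7 * (4 * (L : ℝ) ^ 2 + (2 * (ℓ : ℝ) - 1) ^ 2 * x ^ 2) ^ 7)))
      atTop (nhds (Real.arctan x)) := by
  rw [tendsto_iff_dist_tendsto_zero]
  apply squeeze_zero' (Eventually.of_forall fun L => dist_nonneg)
    ?_ (tendsto_const_div_atTop_nhds_zero_nat ((3 * x ^ 2 + x ^ 4 + x ^ 6) * |x|))
  filter_upwards [eventually_ge_atTop 1] with L hL
  have hlr : (1:ℝ) ≤ (L:ℝ) := by exact_mod_cast hL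
  have hlr0 : (0:ℝ) < (L:ℝ) := by linarith
  rw [Real.dist_eq]
  set f : ℕ → ℝ := fun i => Real.arctan ((i : ℝ) / (L : ℝ) * x) with hf
  have htel : Real.arctan x = ∑ i ∈ Finset.range L, (f (i + 1) - f i) := by
    rw [Finset.sum_range_sub f L, hf]
    simp only [Nat.cast_zero, zero_div, zero_mul, Real.arctan_zero, sub_zero]
    rw [div_self hlr0.ne', one_mul]
  rw [← Finset.Ico_add_one_right_eq_Icc, Finset.sum_Ico_eq_sum_range]
  simp only [Nat.add_sub_cancel]
  rw [htel, ← Finset.sum_sub_distrib]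
  refine (Finset.abs_sum_le_sum_abs _ _).trans ?_
  have hbound : ∀ i ∈ Finset.range L,
      |(4 * (L : ℝ) * x / (4 * (L : ℝ) ^ 2 + (2 * ((1 + i : ℕ) : ℝ) - 1) ^ 2 * x ^ 2)
        - 4 * (L : ℝ) * x ^ 3 *
            (4 * (L : ℝ) ^ 2 - 3 * (2 * ((1 + i : ℕ) : ℝ) - 1) ^ 2 * x ^ 2) /
          (3 * (4 * (L : ℝ) ^ 2 + (2 * ((1 + i : ℕ) : ℝ) - 1) ^ 2 * x ^ 2) ^ 3)
        + 4 * (L : ℝ) * x ^ 5 *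
            (16 * (L : ℝ) ^ 4 - 40 * (2 * ((1 + i : ℕ) : ℝ) - 1) ^ 2 * (L : ℝ) ^ 2 * x ^ 2
              + 5 * (2 * ((1 + i : ℕ) : ℝ) - 1) ^ 4 * x ^ 4) /
          (5 * (4 * (L : ℝ) ^ 2 + (2 * ((1 + i : ℕ) : ℝ) - 1) ^ 2 * x ^ 2) ^ 5)
        - 4 * (L : ℝ) * x ^ 7 *
            (64 * (L : ℝ) ^ 6 - 336 * (2 * ((1 + i : ℕ) : ℝ) - 1) ^ 2 * (L : ℝ) ^ 4 * x ^ 2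
              + 140 * (2 * ((1 + i : ℕ) : ℝ) - 1) ^ 4 * (L : ℝ) ^ 2 * x ^ 4
              - 7 * (2 * ((1 + i : ℕ) : ℝ) - 1) ^ 6 * x ^ 6) /
          (7 * (4 * (L : ℝ) ^ 2 + (2 * ((1 + i : ℕ) : ℝ) - 1) ^ 2 * x ^ 2) ^ 7))
        - (f (i + 1) - f i)|
      ≤ (3 * x ^ 2 + x ^ 4 + x ^ 6) * |x| / (L : ℝ) ^ 2 := by
    intro i hi
    have hiL : i + 1 ≤ L := Finset.mem_range.mp hi
    have hn1 : (1:ℝ) ≤ ((1 + i : ℕ) : ℝ) := by push_cast; linarith [Nat.cast_nonneg (α := ℝ) i]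
    have hnL : ((1 + i : ℕ) : ℝ) ≤ (L : ℝ) := by exact_mod_cast (by omega : 1 + i ≤ L)
    have h := arctanAux_per_term x (L : ℝ) ((1 + i : ℕ) : ℝ) hlr hn1 hnL
    have hfe : f (i + 1) - f i
        = Real.arctan (((1 + i : ℕ) : ℝ) / (L : ℝ) * x)
          - Real.arctan ((((1 + i : ℕ) : ℝ) - 1) / (L : ℝ) * x) := by
      rw [hf]
      push_cast
      ring_nf
    rw [hfe]
    exact h
  refine (Finset.sum_le_sum hbound).trans ?_
  rw [Finset.sum_const, Finset.card_range, nsmul_eq_mul]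
  have heq : (L:ℝ) * ((3 * x ^ 2 + x ^ 4 + x ^ 6) * |x| / (L:ℝ) ^ 2)
      = (3 * x ^ 2 + x ^ 4 + x ^ 6) * |x| / (L:ℝ) := by
    field_simp
  rw [heq]
end

section
/- π equals 4 times the limit as L → ∞ (L a positive integer) of Σ_{ℓ=1}^{L} [ 4L / (4L² + (2ℓ−1)²) − 4L (4L² − 3(2ℓ−1)²) / (3 (4L² + (2ℓ−1)²)³) ]. -/
open Filter Finset

noncomputable def fI : ℝ → ℝ := fun x => 1 / (1 + x ^ 2)

lemma fI_cont : Continuous fI := by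
  unfold fI
  exact continuous_const.div (by continuity) (fun x => by positivity)

lemma fI_anti {x y : ℝ} (hx : 0 ≤ x) (hxy : x ≤ y) : fI y ≤ fI x := by
  unfold fI
  apply one_div_le_one_div_of_le (by positivity)
  nlinarith

lemma fI_intable (a b : ℝ) : IntervalIntegrable fI MeasureTheory.volume a b :=
  fI_cont.intervalIntegrable a b

lemma int_le {a b : ℝ} (h0 : 0 ≤ a) (hab : a ≤ b) :
    (∫ x in a..b, fI x) ≤ (b - a) * fI a := by
  have := intervalIntegral.integral_mono_on hab (fI_intable a b)
      (intervalIntegrable_const (c := fI a))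
      (fun x hx => fI_anti h0 hx.1)
  simpa [mul_comm] using this

lemma le_int {a b : ℝ} (h0 : 0 ≤ a) (hab : a ≤ b) :
    (b - a) * fI b ≤ ∫ x in a..b, fI x := by
  have := intervalIntegral.integral_mono_on hab
      (intervalIntegrable_const (c := fI b)) (fI_intable a b)
      (fun x hx => fI_anti (le_trans h0 hx.1) hx.2)
  simpa [mul_comm] using this

lemma main_sum_bound (L : ℕ) (hL : 1 ≤ L) :
    |(∑ ℓ ∈ Finset.Icc 1 L,
        (4 * (L : ℝ) / (4 * (L : ℝ) ^ 2 + (2 * (ℓ : ℝ) - 1) ^ 2))) - Real.pi / 4|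
      ≤ 1 / (L : ℝ) := by
  have hLpos : (0:ℝ) < L := by exact_mod_cast hL
  have hLne : (L:ℝ) ≠ 0 := ne_of_gt hLpos
  -- rewrite summand as (1/L) * fI (midpoint)
  have hterm : ∀ ℓ : ℕ,
      4 * (L : ℝ) / (4 * (L : ℝ) ^ 2 + (2 * (ℓ : ℝ) - 1) ^ 2)
        = (1 / L) * fI ((2 * (ℓ:ℝ) - 1) / (2 * L)) := by
    intro ℓ
    have hden : (4 * (L : ℝ) ^ 2 + (2 * (ℓ : ℝ) - 1) ^ 2) > 0 := by positivity
    have h2 : (1:ℝ) + ((2 * (ℓ:ℝ) - 1) / (2 * L)) ^ 2 > 0 := by positivity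
    unfold fI
    field_simp
    ring
  -- reindex
  have hre : (∑ ℓ ∈ Finset.Icc 1 L,
        (4 * (L : ℝ) / (4 * (L : ℝ) ^ 2 + (2 * (ℓ : ℝ) - 1) ^ 2)))
      = ∑ i ∈ Finset.range L, (1 / (L:ℝ)) * fI ((2 * ((i:ℝ)+1) - 1) / (2 * L)) := by
    rw [← Finset.Ico_add_one_right_eq_Icc, Finset.sum_Ico_eq_sum_range]
    simp only [add_comm 1]
    refine Finset.sum_congr rfl fun i _ => ?_
    rw [hterm (i+1)]
    push_cast
    ring_nf
  rw [hre]
  -- pi/4 as sum of integrals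
  set a : ℕ → ℝ := fun i => (i : ℝ) / L with ha
  have hpi : Real.pi / 4 = ∑ i ∈ Finset.range L, ∫ x in a i..a (i+1), fI x := by
    rw [intervalIntegral.sum_integral_adjacent_intervals (fun k _ => fI_intable _ _)]
    have : a 0 = 0 := by simp [ha]
    have h1 : a L = 1 := by simp [ha, hLne]
    rw [this, h1]
    unfold fI
    rw [integral_one_div_one_add_sq]
    simp [Real.arctan_one]
  rw [hpi, ← Finset.sum_sub_distrib]
  refine le_trans (Finset.abs_sum_le_sum_abs _ _) ?_
  have hbound : ∀ i ∈ Finset.range L,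
      |(1 / (L:ℝ)) * fI ((2 * ((i:ℝ)+1) - 1) / (2 * L)) - ∫ x in a i..a (i+1), fI x|
        ≤ (1 / L) * (fI (a i) - fI (a (i+1))) := by
    intro i hi
    have hi0 : (0:ℝ) ≤ (i:ℝ) := Nat.cast_nonneg i
    have hai0 : 0 ≤ a i := by positivity
    have haii : a i ≤ a (i+1) := by
      rw [ha, div_le_div_iff₀ hLpos hLpos]
      push_cast; nlinarith
    have hmem1 : a i ≤ (2 * ((i:ℝ)+1) - 1) / (2 * L) := by
      rw [ha]; rw [div_le_div_iff₀ hLpos (by positivity)]; ring_nf; nlinarith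
    have hmem2 : (2 * ((i:ℝ)+1) - 1) / (2 * L) ≤ a (i+1) := by
      rw [ha]; rw [div_le_div_iff₀ (by positivity) hLpos]; push_cast; nlinarith
    have hlen : a (i+1) - a i = 1 / L := by
      rw [ha]; push_cast; field_simp; ring
    have hfm1 : fI ((2 * ((i:ℝ)+1) - 1) / (2 * L)) ≤ fI (a i) := fI_anti hai0 hmem1
    have hfm2 : fI (a (i+1)) ≤ fI ((2 * ((i:ℝ)+1) - 1) / (2 * L)) :=
      fI_anti (le_trans hai0 hmem1) hmem2
    have hint1 : (∫ x in a i..a (i+1), fI x) ≤ (1/L) * fI (a i) := by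
      have := int_le hai0 haii; rwa [hlen] at this
    have hint2 : (1/L) * fI (a (i+1)) ≤ ∫ x in a i..a (i+1), fI x := by
      have := le_int hai0 haii; rwa [hlen] at this
    rw [abs_le]
    constructor
    · have h1 : (1 / (L:ℝ)) * fI ((2 * ((i:ℝ)+1) - 1) / (2 * L)) ≥ (1/L) * fI (a (i+1)) := by
        apply mul_le_mul_of_nonneg_left hfm2 (by positivity)
      nlinarith
    · have h1 : (1 / (L:ℝ)) * fI ((2 * ((i:ℝ)+1) - 1) / (2 * L)) ≤ (1/L) * fI (a i) := by
        apply mul_le_mul_of_nonneg_left hfm1 (by positivity)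
      nlinarith
  refine le_trans (Finset.sum_le_sum hbound) ?_
  rw [← Finset.mul_sum, Finset.sum_range_sub' (fun i => fI (a i))]
  have h0 : fI (a 0) = 1 := by simp [ha, fI]
  have h1 : fI (a L) = 1/2 := by
    have : a L = 1 := by simp [ha, hLne]
    rw [this]; norm_num [fI]
  rw [h0, h1]
  rw [div_mul_eq_mul_div, one_mul, div_le_div_iff₀ hLpos hLpos]
  nlinarith

lemma corr_bound (L : ℕ) (hL : 1 ≤ L) :
    |∑ ℓ ∈ Finset.Icc 1 L,
        (4 * (L : ℝ) * (4 * (L : ℝ) ^ 2 - 3 * (2 * (ℓ : ℝ) - 1) ^ 2) /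
          (3 * (4 * (L : ℝ) ^ 2 + (2 * (ℓ : ℝ) - 1) ^ 2) ^ 3))|
      ≤ 1 / (L : ℝ) := by
  have hLpos : (0:ℝ) < L := by exact_mod_cast hL
  refine le_trans (Finset.abs_sum_le_sum_abs _ _) ?_
  have hb : ∀ ℓ ∈ Finset.Icc 1 L,
      |4 * (L : ℝ) * (4 * (L : ℝ) ^ 2 - 3 * (2 * (ℓ : ℝ) - 1) ^ 2) /
          (3 * (4 * (L : ℝ) ^ 2 + (2 * (ℓ : ℝ) - 1) ^ 2) ^ 3)|
        ≤ 1 / (3 * (L:ℝ)^3) := by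
    intro ℓ hℓ
    rw [Finset.mem_Icc] at hℓ
    have hl1 : (1:ℝ) ≤ (ℓ:ℝ) := by exact_mod_cast hℓ.1
    have hl2 : (ℓ:ℝ) ≤ (L:ℝ) := by exact_mod_cast hℓ.2
    have hm : (2 * (ℓ:ℝ) - 1) ^ 2 ≤ 4 * (L:ℝ)^2 := by nlinarith
    have hm0 : (0:ℝ) ≤ (2 * (ℓ:ℝ) - 1) ^ 2 := sq_nonneg _
    have hdenpos : (0:ℝ) < 3 * (4 * (L : ℝ) ^ 2 + (2 * (ℓ : ℝ) - 1) ^ 2) ^ 3 := by positivity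
    rw [abs_div, abs_of_pos hdenpos]
    have hnum : |4 * (L : ℝ) * (4 * (L : ℝ) ^ 2 - 3 * (2 * (ℓ : ℝ) - 1) ^ 2)| ≤ 64 * (L:ℝ)^3 := by
      rw [abs_mul]
      have h1 : |4 * (L:ℝ)| = 4 * L := abs_of_nonneg (by positivity)
      have h2 : |4 * (L : ℝ) ^ 2 - 3 * (2 * (ℓ : ℝ) - 1) ^ 2| ≤ 16 * (L:ℝ)^2 := by
        rw [abs_le]; constructor <;> nlinarith
      rw [h1]
      calc 4 * (L:ℝ) * |4 * (L : ℝ) ^ 2 - 3 * (2 * (ℓ : ℝ) - 1) ^ 2|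
          ≤ 4 * (L:ℝ) * (16 * (L:ℝ)^2) := by
            apply mul_le_mul_of_nonneg_left h2 (by positivity)
        _ = 64 * (L:ℝ)^3 := by ring
    have hden : 192 * (L:ℝ)^6 ≤ 3 * (4 * (L : ℝ) ^ 2 + (2 * (ℓ : ℝ) - 1) ^ 2) ^ 3 := by
      have h4 : (0:ℝ) ≤ (L:ℝ)^4 * (2*(ℓ:ℝ)-1)^2 := by positivity
      have h5 : (0:ℝ) ≤ (L:ℝ)^2 * (2*(ℓ:ℝ)-1)^4 := by positivity
      have h6 : (0:ℝ) ≤ (2*(ℓ:ℝ)-1)^6 := by positivity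
      nlinarith [h4, h5, h6]
    calc |4 * (L : ℝ) * (4 * (L : ℝ) ^ 2 - 3 * (2 * (ℓ : ℝ) - 1) ^ 2)| /
          (3 * (4 * (L : ℝ) ^ 2 + (2 * (ℓ : ℝ) - 1) ^ 2) ^ 3)
        ≤ (64 * (L:ℝ)^3) / (192 * (L:ℝ)^6) := by
          apply div_le_div₀ (by positivity) hnum (by positivity) hden
      _ = 1 / (3 * (L:ℝ)^3) := by
          field_simp; ring
  refine le_trans (Finset.sum_le_sum hb) ?_
  rw [Finset.sum_const, Nat.card_Icc]
  simp only [nsmul_eq_mul]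
  have : ((L + 1 - 1 : ℕ) : ℝ) = L := by simp
  rw [this, mul_one_div, div_le_div_iff₀ (by positivity) hLpos]
  have h1 : (1:ℝ) ≤ (L:ℝ) := by exact_mod_cast hL
  nlinarith

theorem pi_enhanced_midpoint_M2_limit :
    Tendsto
      (fun L : ℕ =>
        4 * ∑ ℓ ∈ Finset.Icc 1 L,
          (4 * (L : ℝ) / (4 * (L : ℝ) ^ 2 + (2 * (ℓ : ℝ) - 1) ^ 2)
            - 4 * (L : ℝ) * (4 * (L : ℝ) ^ 2 - 3 * (2 * (ℓ : ℝ) - 1) ^ 2) /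
              (3 * (4 * (L : ℝ) ^ 2 + (2 * (ℓ : ℝ) - 1) ^ 2) ^ 3)))
      atTop (nhds Real.pi) := by
  have h1L : Tendsto (fun L : ℕ => 1 / (L:ℝ)) atTop (nhds 0) :=
    tendsto_one_div_atTop_nhds_zero_nat
  have hA0 : Tendsto (fun L : ℕ =>
      (∑ ℓ ∈ Finset.Icc 1 L,
        (4 * (L : ℝ) / (4 * (L : ℝ) ^ 2 + (2 * (ℓ : ℝ) - 1) ^ 2))) - Real.pi / 4)
      atTop (nhds 0) := by
    apply squeeze_zero_norm' ?_ h1L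
    filter_upwards [eventually_ge_atTop 1] with L hL
    exact main_sum_bound L hL
  have hA : Tendsto (fun L : ℕ =>
      ∑ ℓ ∈ Finset.Icc 1 L,
        (4 * (L : ℝ) / (4 * (L : ℝ) ^ 2 + (2 * (ℓ : ℝ) - 1) ^ 2)))
      atTop (nhds (Real.pi / 4)) := by
    have := hA0.add (tendsto_const_nhds (x := Real.pi / 4) (f := atTop (α := ℕ)))
    simpa using this
  have hB : Tendsto (fun L : ℕ =>
      ∑ ℓ ∈ Finset.Icc 1 L,
        (4 * (L : ℝ) * (4 * (L : ℝ) ^ 2 - 3 * (2 * (ℓ : ℝ) - 1) ^ 2) /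
          (3 * (4 * (L : ℝ) ^ 2 + (2 * (ℓ : ℝ) - 1) ^ 2) ^ 3)))
      atTop (nhds 0) := by
    apply squeeze_zero_norm' ?_ h1L
    filter_upwards [eventually_ge_atTop 1] with L hL
    exact corr_bound L hL
  have := ((hA.sub hB).const_mul 4)
  have heq : 4 * (Real.pi / 4 - 0) = Real.pi := by ring
  rw [heq] at this
  convert this using 2 with L
  rw [Finset.sum_sub_distrib]
end

section
/- π equals 4 times the limit as L → ∞ (L a positive integer) of Σ_{ℓ=1}^{L} [ 4L / (4L² + (2ℓ−1)²) − 4L (4L² − 3(2ℓ−1)²) / (3 (4L² + (2ℓ−1)²)³) + 4L (16L⁴ − 40(2ℓ−1)² L² + 5(2ℓ−1)⁴) / (5 (4L² + (2ℓ−1)²)⁵) − 4L (64L⁶ − 336(2ℓ−1)² L⁴ + 140(2ℓ−1)⁴ L² − 7(2ℓ−1)⁶) / (7 (4L² + (2ℓ−1)²)⁷) ]. -/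
open Filter


lemma my_arctan_le {x : ℝ} (hx : 0 ≤ x) : Real.arctan x ≤ x := by
  have hm : Monotone (fun t : ℝ => t - Real.arctan t) := by
    apply monotone_of_deriv_nonneg
    · exact differentiable_id.sub Real.differentiable_arctan
    · intro t
      have h : HasDerivAt (fun t : ℝ => t - Real.arctan t) (1 - 1 / (1 + t ^ 2)) t :=
        (hasDerivAt_id t).sub (Real.hasDerivAt_arctan t)
      rw [h.deriv]
      have h1 : (0:ℝ) < 1 + t ^ 2 := by positivity
      rw [sub_nonneg, div_le_one h1]
      nlinarith [sq_nonneg t]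
  have := hm hx
  simpa using this

lemma my_arctan_ge {x : ℝ} (hx : 0 ≤ x) : x - x ^ 3 / 3 ≤ Real.arctan x := by
  have hm : Monotone (fun t : ℝ => Real.arctan t - (t - t ^ 3 / 3)) := by
    apply monotone_of_deriv_nonneg
    · exact Real.differentiable_arctan.sub
        (differentiable_id.sub ((differentiable_pow 3).div_const 3))
    · intro t
      have h : HasDerivAt (fun t : ℝ => Real.arctan t - (t - t ^ 3 / 3))
          (1 / (1 + t ^ 2) - (1 - (3 : ℕ) * t ^ (3 - 1) / 3)) t :=
        (Real.hasDerivAt_arctan t).sub ((hasDerivAt_id t).sub ((hasDerivAt_pow 3 t).div_const 3))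
      rw [h.deriv]
      have h1 : (0:ℝ) < 1 + t ^ 2 := by positivity
      have h2 : 1 / (1 + t ^ 2) - (1 - (3 : ℕ) * t ^ (3 - 1) / 3) = t ^ 4 / (1 + t ^ 2) := by
        push_cast
        field_simp
        ring
      rw [h2]
      positivity
  have := hm hx
  simpa using this

lemma my_abs_div_le {a b m k : ℝ} (hb : 0 < b) (hm : 0 < m)
    (h1 : -(k * b) ≤ a * m) (h2 : a * m ≤ k * b) : |a / b| ≤ k / m := by
  rw [abs_div, abs_of_pos hb, div_le_div_iff₀ hb hm]
  rcases abs_cases a with ⟨h, _⟩ | ⟨h, _⟩ <;> rw [h] <;> linarith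

set_option maxHeartbeats 1000000 in
lemma my_aux (n l : ℝ) (hn : 1 ≤ n) (hl1 : 1 ≤ l) (hl2 : l ≤ n) :
    |(4 * n / (4 * n ^ 2 + (2 * l - 1) ^ 2)
        - 4 * n * (4 * n ^ 2 - 3 * (2 * l - 1) ^ 2) /
          (3 * (4 * n ^ 2 + (2 * l - 1) ^ 2) ^ 3)
        + 4 * n * (16 * n ^ 4 - 40 * (2 * l - 1) ^ 2 * n ^ 2 + 5 * (2 * l - 1) ^ 4) /
          (5 * (4 * n ^ 2 + (2 * l - 1) ^ 2) ^ 5)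
        - 4 * n * (64 * n ^ 6 - 336 * (2 * l - 1) ^ 2 * n ^ 4
              + 140 * (2 * l - 1) ^ 4 * n ^ 2 - 7 * (2 * l - 1) ^ 6) /
          (7 * (4 * n ^ 2 + (2 * l - 1) ^ 2) ^ 7))
      - (Real.arctan (l / n) - Real.arctan ((l - 1) / n))| ≤ 2 / n ^ 3 := by
  have hn0 : 0 < n := by linarith
  set d : ℝ := 2 * l - 1 with hd
  clear_value d
  have hd1 : 1 ≤ d := by rw [hd]; linarith
  have hdn : d ≤ 2 * n := by rw [hd]; linarith
  set D : ℝ := 4 * n ^ 2 + d ^ 2 with hD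
  clear_value D
  have hd2 : 1 ≤ d ^ 2 := one_le_pow₀ hd1
  have hn2 : 1 ≤ n ^ 2 := one_le_pow₀ hn
  have hD0 : 0 < D := by nlinarith
  have hD1 : 4 * n ^ 2 + 1 ≤ D := by nlinarith
  have hDm : 0 < D - 1 := by nlinarith
  have hn3 : 0 < n ^ 3 := pow_pos hn0 3
  have hn5 : 0 < n ^ 5 := pow_pos hn0 5
  have hn7 : 0 < n ^ 7 := pow_pos hn0 7
  have hD3 : 0 < D ^ 3 := pow_pos hD0 3
  have hD5 : 0 < D ^ 5 := pow_pos hD0 5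
  have hD7 : 0 < D ^ 7 := pow_pos hD0 7
  set u : ℝ := 4 * n / (D - 1) with hu
  clear_value u
  have hu0 : 0 ≤ u := by rw [hu]; exact div_nonneg (by linarith) hDm.le
  have hun : u ≤ 1 / n := by
    rw [hu, div_le_div_iff₀ hDm hn0, hD]
    nlinarith
  -- arctan identity
  have harc : Real.arctan (l / n) - Real.arctan ((l - 1) / n) = Real.arctan u := by
    have hprod : 0 ≤ (l / n) * ((l - 1) / n) := by
      apply mul_nonneg <;> apply div_nonneg <;> linarith
    have hxy : (l / n) * (-((l - 1) / n)) < 1 := by nlinarith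
    rw [sub_eq_add_neg, ← Real.arctan_neg, Real.arctan_add hxy]
    congr 1
    rw [hu, hD, hd]
    have hne : 1 - (l / n) * (-((l - 1) / n)) ≠ 0 := by nlinarith
    have hne2 : 4 * n ^ 2 + (2 * l - 1) ^ 2 - 1 ≠ 0 := by nlinarith
    rw [div_eq_div_iff hne hne2]
    field_simp
    ring
  -- piece bounds
  have hB1 : |4 * n / D - u| ≤ (1/4) / n ^ 3 := by
    have heq : 4 * n / D - u = -(4 * n / (D * (D - 1))) := by
      rw [hu]; field_simp; ring
    rw [heq, abs_neg]
    refine my_abs_div_le (by nlinarith) hn3 ?_ ?_ <;> rw [hD] <;>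
      nlinarith [mul_nonneg (sub_nonneg.mpr hd2) (sq_nonneg n),
        mul_nonneg (sub_nonneg.mpr hd2) (sq_nonneg d)]
  have hBa : |u - Real.arctan u| ≤ (1/3) / n ^ 3 := by
    have hu3 : u ^ 3 ≤ 1 / n ^ 3 := by
      have := pow_le_pow_left₀ hu0 hun 3
      rwa [div_pow, one_pow] at this
    have h1 := my_arctan_le hu0
    have h2 := my_arctan_ge hu0
    have hc : (1/3) / n ^ 3 = (1 / n ^ 3) / 3 := by ring
    rw [abs_le, hc]
    have hp : 0 < 1 / n ^ 3 := by positivity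
    constructor <;> linarith
  have hB2 : |4 * n * (4 * n ^ 2 - 3 * d ^ 2) / (3 * D ^ 3)| ≤ (1/4) / n ^ 3 := by
    refine my_abs_div_le (by nlinarith) hn3 ?_ ?_ <;> rw [hD] <;>
      nlinarith [sq_nonneg (n^3), sq_nonneg (n^2*d), sq_nonneg (n*d^2), sq_nonneg (d^3)]
  have hB3 : |4 * n * (16 * n ^ 4 - 40 * d ^ 2 * n ^ 2 + 5 * d ^ 4) / (5 * D ^ 5)|
      ≤ (1/16) / n ^ 3 := by
    have step : |4 * n * (16 * n ^ 4 - 40 * d ^ 2 * n ^ 2 + 5 * d ^ 4) / (5 * D ^ 5)|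
        ≤ (1/16) / n ^ 5 := by
      refine my_abs_div_le (by nlinarith) hn5 ?_ ?_ <;> rw [hD] <;>
        nlinarith [sq_nonneg (n^5), sq_nonneg (n^4*d), sq_nonneg (n^3*d^2),
          sq_nonneg (n^2*d^3), sq_nonneg (n*d^4), sq_nonneg (d^5)]
    refine step.trans ?_
    rw [div_le_div_iff₀ hn5 hn3]
    have h35 : n ^ 3 ≤ n ^ 5 := pow_le_pow_right₀ hn (by norm_num)
    nlinarith
  have hB4 : |4 * n * (64 * n ^ 6 - 336 * d ^ 2 * n ^ 4 + 140 * d ^ 4 * n ^ 2 - 7 * d ^ 6)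
        / (7 * D ^ 7)| ≤ 1 / n ^ 3 := by
    have step : |4 * n * (64 * n ^ 6 - 336 * d ^ 2 * n ^ 4 + 140 * d ^ 4 * n ^ 2 - 7 * d ^ 6)
        / (7 * D ^ 7)| ≤ 1 / n ^ 7 := by
      refine my_abs_div_le (by nlinarith) hn7 ?_ ?_ <;> rw [hD] <;>
        nlinarith [sq_nonneg (n^7), sq_nonneg (n^6*d), sq_nonneg (n^5*d^2),
          sq_nonneg (n^4*d^3), sq_nonneg (n^3*d^4), sq_nonneg (n^2*d^5),
          sq_nonneg (n*d^6), sq_nonneg (d^7)]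
    refine step.trans ?_
    rw [div_le_div_iff₀ hn7 hn3]
    have h37 : n ^ 3 ≤ n ^ 7 := pow_le_pow_right₀ hn (by norm_num)
    nlinarith
  -- assembly
  rw [harc]
  have hid : 4 * n / D
        - 4 * n * (4 * n ^ 2 - 3 * d ^ 2) / (3 * D ^ 3)
        + 4 * n * (16 * n ^ 4 - 40 * d ^ 2 * n ^ 2 + 5 * d ^ 4) / (5 * D ^ 5)
        - 4 * n * (64 * n ^ 6 - 336 * d ^ 2 * n ^ 4 + 140 * d ^ 4 * n ^ 2 - 7 * d ^ 6)
            / (7 * D ^ 7)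
        - Real.arctan u
      = (4 * n / D - u) + (u - Real.arctan u)
        - (4 * n * (4 * n ^ 2 - 3 * d ^ 2) / (3 * D ^ 3))
        + (4 * n * (16 * n ^ 4 - 40 * d ^ 2 * n ^ 2 + 5 * d ^ 4) / (5 * D ^ 5))
        - (4 * n * (64 * n ^ 6 - 336 * d ^ 2 * n ^ 4 + 140 * d ^ 4 * n ^ 2 - 7 * d ^ 6)
            / (7 * D ^ 7)) := by ring
  rw [hid]
  rcases abs_le.mp hB1 with ⟨a1, b1⟩
  rcases abs_le.mp hBa with ⟨a2, b2⟩
  rcases abs_le.mp hB2 with ⟨a3, b3⟩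
  rcases abs_le.mp hB3 with ⟨a4, b4⟩
  rcases abs_le.mp hB4 with ⟨a5, b5⟩
  have e1 : (1/4 : ℝ) / n ^ 3 = (1/4) * (1 / n ^ 3) := by ring
  have e2 : (1/3 : ℝ) / n ^ 3 = (1/3) * (1 / n ^ 3) := by ring
  have e3 : (1/16 : ℝ) / n ^ 3 = (1/16) * (1 / n ^ 3) := by ring
  have e5 : (2 : ℝ) / n ^ 3 = 2 * (1 / n ^ 3) := by ring
  rw [abs_le, e5]
  rw [e1] at a1 b1 a3 b3
  rw [e2] at a2 b2
  rw [e3] at a4 b4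
  have e4 : (1 : ℝ) / n ^ 3 = 1 * (1 / n ^ 3) := by ring
  rw [e4] at a5 b5
  constructor <;> linarith


lemma my_telesc (L : ℕ) (hL : 1 ≤ L) :
    ∑ ℓ ∈ Finset.Icc 1 L,
      (Real.arctan ((ℓ : ℝ) / (L : ℝ)) - Real.arctan (((ℓ : ℝ) - 1) / (L : ℝ)))
      = Real.pi / 4 := by
  have hL0 : (L : ℝ) ≠ 0 := by positivity
  have h := Finset.sum_range_sub (fun i : ℕ => Real.arctan ((i : ℝ) / (L : ℝ))) L
  rw [← Finset.Ico_add_one_right_eq_Icc, Finset.sum_Ico_eq_sum_range]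
  simp only [Nat.add_sub_cancel]
  have heq : ∀ i ∈ Finset.range L,
      (Real.arctan (((1 + i : ℕ) : ℝ) / (L : ℝ)) - Real.arctan ((((1 + i : ℕ) : ℝ) - 1) / (L : ℝ)))
      = Real.arctan (((i + 1 : ℕ) : ℝ) / (L : ℝ)) - Real.arctan ((i : ℝ) / (L : ℝ)) := by
    intro i _
    push_cast
    ring_nf
  rw [Finset.sum_congr rfl heq, h]
  simp [div_self hL0, Real.arctan_one, Real.arctan_zero]

set_option maxHeartbeats 1000000 in
theorem pi_enhanced_midpoint_M6_limit :
    Tendsto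
      (fun L : ℕ =>
        4 * ∑ ℓ ∈ Finset.Icc 1 L,
          (4 * (L : ℝ) / (4 * (L : ℝ) ^ 2 + (2 * (ℓ : ℝ) - 1) ^ 2)
            - 4 * (L : ℝ) * (4 * (L : ℝ) ^ 2 - 3 * (2 * (ℓ : ℝ) - 1) ^ 2) /
              (3 * (4 * (L : ℝ) ^ 2 + (2 * (ℓ : ℝ) - 1) ^ 2) ^ 3)
            + 4 * (L : ℝ) *
                (16 * (L : ℝ) ^ 4 - 40 * (2 * (ℓ : ℝ) - 1) ^ 2 * (L : ℝ) ^ 2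
                  + 5 * (2 * (ℓ : ℝ) - 1) ^ 4) /
              (5 * (4 * (L : ℝ) ^ 2 + (2 * (ℓ : ℝ) - 1) ^ 2) ^ 5)
            - 4 * (L : ℝ) *
                (64 * (L : ℝ) ^ 6 - 336 * (2 * (ℓ : ℝ) - 1) ^ 2 * (L : ℝ) ^ 4
                  + 140 * (2 * (ℓ : ℝ) - 1) ^ 4 * (L : ℝ) ^ 2
                  - 7 * (2 * (ℓ : ℝ) - 1) ^ 6) /
              (7 * (4 * (L : ℝ) ^ 2 + (2 * (ℓ : ℝ) - 1) ^ 2) ^ 7)))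
      atTop (nhds Real.pi) := by
  rw [← tendsto_sub_nhds_zero_iff]
  refine squeeze_zero_norm' (a := fun L : ℕ => 8 / (L : ℝ)) ?_ ?_
  · filter_upwards [eventually_ge_atTop 1] with L hL
    have hn : (1 : ℝ) ≤ (L : ℝ) := by exact_mod_cast hL
    have hn0 : (0 : ℝ) < (L : ℝ) := by linarith
    have hn3 : (0 : ℝ) < (L : ℝ) ^ 3 := by positivity
    rw [Real.norm_eq_abs]
    have hsplit :
        (4 * ∑ ℓ ∈ Finset.Icc 1 L,
          (4 * (L : ℝ) / (4 * (L : ℝ) ^ 2 + (2 * (ℓ : ℝ) - 1) ^ 2)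
            - 4 * (L : ℝ) * (4 * (L : ℝ) ^ 2 - 3 * (2 * (ℓ : ℝ) - 1) ^ 2) /
              (3 * (4 * (L : ℝ) ^ 2 + (2 * (ℓ : ℝ) - 1) ^ 2) ^ 3)
            + 4 * (L : ℝ) *
                (16 * (L : ℝ) ^ 4 - 40 * (2 * (ℓ : ℝ) - 1) ^ 2 * (L : ℝ) ^ 2
                  + 5 * (2 * (ℓ : ℝ) - 1) ^ 4) /
              (5 * (4 * (L : ℝ) ^ 2 + (2 * (ℓ : ℝ) - 1) ^ 2) ^ 5)
            - 4 * (L : ℝ) *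
                (64 * (L : ℝ) ^ 6 - 336 * (2 * (ℓ : ℝ) - 1) ^ 2 * (L : ℝ) ^ 4
                  + 140 * (2 * (ℓ : ℝ) - 1) ^ 4 * (L : ℝ) ^ 2
                  - 7 * (2 * (ℓ : ℝ) - 1) ^ 6) /
              (7 * (4 * (L : ℝ) ^ 2 + (2 * (ℓ : ℝ) - 1) ^ 2) ^ 7))) - Real.pi
        = 4 * ∑ ℓ ∈ Finset.Icc 1 L,
            ((4 * (L : ℝ) / (4 * (L : ℝ) ^ 2 + (2 * (ℓ : ℝ) - 1) ^ 2)
            - 4 * (L : ℝ) * (4 * (L : ℝ) ^ 2 - 3 * (2 * (ℓ : ℝ) - 1) ^ 2) /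
              (3 * (4 * (L : ℝ) ^ 2 + (2 * (ℓ : ℝ) - 1) ^ 2) ^ 3)
            + 4 * (L : ℝ) *
                (16 * (L : ℝ) ^ 4 - 40 * (2 * (ℓ : ℝ) - 1) ^ 2 * (L : ℝ) ^ 2
                  + 5 * (2 * (ℓ : ℝ) - 1) ^ 4) /
              (5 * (4 * (L : ℝ) ^ 2 + (2 * (ℓ : ℝ) - 1) ^ 2) ^ 5)
            - 4 * (L : ℝ) *
                (64 * (L : ℝ) ^ 6 - 336 * (2 * (ℓ : ℝ) - 1) ^ 2 * (L : ℝ) ^ 4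
                  + 140 * (2 * (ℓ : ℝ) - 1) ^ 4 * (L : ℝ) ^ 2
                  - 7 * (2 * (ℓ : ℝ) - 1) ^ 6) /
              (7 * (4 * (L : ℝ) ^ 2 + (2 * (ℓ : ℝ) - 1) ^ 2) ^ 7))
            - (Real.arctan ((ℓ : ℝ) / (L : ℝ)) - Real.arctan (((ℓ : ℝ) - 1) / (L : ℝ)))) := by
      conv_rhs => rw [Finset.sum_sub_distrib, my_telesc L hL]
      ring
    rw [hsplit, abs_mul, abs_of_nonneg (by norm_num : (0:ℝ) ≤ 4)]
    have hsum : |∑ ℓ ∈ Finset.Icc 1 L,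
            ((4 * (L : ℝ) / (4 * (L : ℝ) ^ 2 + (2 * (ℓ : ℝ) - 1) ^ 2)
            - 4 * (L : ℝ) * (4 * (L : ℝ) ^ 2 - 3 * (2 * (ℓ : ℝ) - 1) ^ 2) /
              (3 * (4 * (L : ℝ) ^ 2 + (2 * (ℓ : ℝ) - 1) ^ 2) ^ 3)
            + 4 * (L : ℝ) *
                (16 * (L : ℝ) ^ 4 - 40 * (2 * (ℓ : ℝ) - 1) ^ 2 * (L : ℝ) ^ 2
                  + 5 * (2 * (ℓ : ℝ) - 1) ^ 4) /
              (5 * (4 * (L : ℝ) ^ 2 + (2 * (ℓ : ℝ) - 1) ^ 2) ^ 5)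
            - 4 * (L : ℝ) *
                (64 * (L : ℝ) ^ 6 - 336 * (2 * (ℓ : ℝ) - 1) ^ 2 * (L : ℝ) ^ 4
                  + 140 * (2 * (ℓ : ℝ) - 1) ^ 4 * (L : ℝ) ^ 2
                  - 7 * (2 * (ℓ : ℝ) - 1) ^ 6) /
              (7 * (4 * (L : ℝ) ^ 2 + (2 * (ℓ : ℝ) - 1) ^ 2) ^ 7))
            - (Real.arctan ((ℓ : ℝ) / (L : ℝ)) - Real.arctan (((ℓ : ℝ) - 1) / (L : ℝ))))|
          ≤ (L : ℝ) * (2 / (L : ℝ) ^ 3) := by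
      refine (Finset.abs_sum_le_sum_abs _ _).trans ?_
      have hcard : ((Finset.Icc 1 L).card : ℝ) = (L : ℝ) := by
        simp [Nat.card_Icc]
      calc ∑ ℓ ∈ Finset.Icc 1 L, |_| ≤ ∑ ℓ ∈ Finset.Icc 1 L, (2 / (L : ℝ) ^ 3) := by
            apply Finset.sum_le_sum
            intro ℓ hℓ
            rw [Finset.mem_Icc] at hℓ
            exact my_aux (L : ℝ) (ℓ : ℝ) hn (by exact_mod_cast hℓ.1) (by exact_mod_cast hℓ.2)
        _ = (L : ℝ) * (2 / (L : ℝ) ^ 3) := by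
            rw [Finset.sum_const, nsmul_eq_mul, hcard]
    calc 4 * |_| ≤ 4 * ((L : ℝ) * (2 / (L : ℝ) ^ 3)) := by linarith [hsum]
      _ ≤ 8 / (L : ℝ) := by
          have he : 4 * ((L : ℝ) * (2 / (L : ℝ) ^ 3)) = 8 / (L : ℝ) ^ 2 := by
            field_simp
            ring
          rw [he, div_le_div_iff₀ (by positivity) hn0]
          nlinarith
  · exact tendsto_const_div_atTop_nhds_zero_nat 8
end

section
/- For every fixed positive integer L, π = 4 · Σ_{ℓ=1}^{L} Σ_{m=0}^{∞} ((−1)^m + 1)/((2L)^{m+1} (m+1)!) · g_{ℓ,m}, where g_{ℓ,m} is the m-th derivative of the function t ↦ 1/(1 + t²) evaluated at t = (2ℓ−1)/(2L), and the inner series converges for each ℓ. -/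
open Complex Filter Topology

noncomputable def Gc : ℂ → ℂ := fun z => 1 / (1 + z ^ 2)

lemma analytic_Gc : AnalyticOnNhd ℂ Gc {z : ℂ | 1 + z ^ 2 ≠ 0} := by
  intro z hz
  exact analyticAt_const.div (analyticAt_const.add (analyticAt_id.pow 2)) hz

lemma analytic_iter (n : ℕ) :
    AnalyticOnNhd ℂ (iteratedDeriv n Gc) {z : ℂ | 1 + z ^ 2 ≠ 0} := by
  induction n with
  | zero => simpa [iteratedDeriv_zero] using analytic_Gc
  | succ n ih => rw [iteratedDeriv_succ]; exact ih.deriv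

lemma one_add_sq_ne (x : ℝ) : (1 : ℂ) + (x : ℂ) ^ 2 ≠ 0 := by
  intro h
  have h' : (1 + x ^ 2 : ℝ) = 0 := by exact_mod_cast h
  nlinarith [sq_nonneg x]

lemma iter_ofReal (n : ℕ) : ∀ x : ℝ,
    iteratedDeriv n Gc (x : ℂ) =
      ((iteratedDeriv n (fun t : ℝ => 1 / (1 + t ^ 2)) x : ℝ) : ℂ) := by
  induction n with
  | zero => intro x; simp [Gc, iteratedDeriv_zero]
  | succ n ih =>
      intro x
      have hdiff : DifferentiableAt ℂ (iteratedDeriv n Gc) (x : ℂ) :=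
        (analytic_iter n _ (one_add_sq_ne x)).differentiableAt
      have hD := hdiff.hasDerivAt
      set D := deriv (iteratedDeriv n Gc) (x : ℂ) with hDdef
      have h1 : HasDerivAt (fun y : ℝ => (iteratedDeriv n Gc (y : ℂ)).re) D.re x :=
        hD.real_of_complex
      have h2 : HasDerivAt (fun y : ℝ => ((-I) * iteratedDeriv n Gc (y : ℂ)).re)
          ((-I) * D).re x := (hD.const_mul (-I)).real_of_complex
      have hfun2 : (fun y : ℝ => ((-I) * iteratedDeriv n Gc (y : ℂ)).re) = fun _ => (0 : ℝ) := by
        funext y; rw [ih y]; simp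
      rw [hfun2] at h2
      have him : D.im = 0 := by
        have h0 : ((-I) * D).re = 0 := h2.unique (hasDerivAt_const x 0)
        simpa using h0
      have hfun1 : (fun y : ℝ => (iteratedDeriv n Gc (y : ℂ)).re) =
          iteratedDeriv n (fun t : ℝ => 1 / (1 + t ^ 2)) := by
        funext y; rw [ih y]; simp
      rw [hfun1] at h1
      rw [iteratedDeriv_succ, iteratedDeriv_succ, h1.deriv, ← hDdef]
      exact Complex.ext (by simp) (by simp [him])

lemma ball_facts {c : ℝ} (hc0 : 0 < c) {z : ℂ} (hz : z ∈ Metric.ball (c : ℂ) 1) :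
    1 - z * I ≠ 0 ∧ 1 + z * I ≠ 0 ∧ (1 + z * I) / (1 - z * I) ∈ slitPlane ∧
      1 + z ^ 2 ≠ 0 := by
  have hd : dist z (c : ℂ) < 1 := Metric.mem_ball.mp hz
  rw [Complex.dist_eq_re_im] at hd
  simp only [Complex.ofReal_re, Complex.ofReal_im, sub_zero] at hd
  have hsq : (z.re - c) ^ 2 + z.im ^ 2 < 1 := by
    have h0 : (0:ℝ) ≤ (z.re - c) ^ 2 + z.im ^ 2 := by positivity
    nlinarith [Real.sq_sqrt h0, Real.sqrt_nonneg ((z.re - c) ^ 2 + z.im ^ 2)]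
  have hde : 1 - z * I ≠ 0 := by
    intro h
    have hre := congrArg Complex.re h
    have him := congrArg Complex.im h
    simp [Complex.sub_re, Complex.sub_im, Complex.mul_re, Complex.mul_im] at hre him
    nlinarith [hsq]
  have hnu : 1 + z * I ≠ 0 := by
    intro h
    have hre := congrArg Complex.re h
    have him := congrArg Complex.im h
    simp [Complex.add_re, Complex.add_im, Complex.mul_re, Complex.mul_im] at hre him
    nlinarith [hsq]
  refine ⟨hde, hnu, ?_, ?_⟩
  · rw [Complex.mem_slitPlane_iff]
    have hns : 0 < Complex.normSq (1 - z * I) := by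
      simpa [Complex.normSq_pos] using hde
    have hreW : ((1 + z * I) / (1 - z * I)).re =
        (1 - z.im ^ 2 - z.re ^ 2) / Complex.normSq (1 - z * I) := by
      rw [Complex.div_re]
      simp [Complex.add_re, Complex.add_im, Complex.sub_re, Complex.sub_im,
        Complex.mul_re, Complex.mul_im, Complex.normSq_apply]
      ring
    have himW : ((1 + z * I) / (1 - z * I)).im =
        (2 * z.re) / Complex.normSq (1 - z * I) := by
      rw [Complex.div_im]
      simp [Complex.add_re, Complex.add_im, Complex.sub_re, Complex.sub_im,
        Complex.mul_re, Complex.mul_im, Complex.normSq_apply]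
      ring
    by_cases hx : z.re = 0
    · left
      rw [hreW]
      apply div_pos _ hns
      rw [hx] at hsq
      nlinarith [hsq]
    · right
      rw [himW]
      exact div_ne_zero (by simpa using hx) hns.ne'
  · intro h
    have hfac : (1 : ℂ) + z ^ 2 = (1 - z * I) * (1 + z * I) := by
      linear_combination (z ^ 2 : ℂ) * Complex.I_sq
    rw [hfac] at h
    rcases mul_eq_zero.mp h with h' | h'
    · exact hde h'
    · exact hnu h'

lemma arctan_hasDerivAt {c : ℝ} (hc0 : 0 < c) {z : ℂ} (hz : z ∈ Metric.ball (c : ℂ) 1) :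
    HasDerivAt Complex.arctan (1 / (1 + z ^ 2)) z := by
  obtain ⟨hde, hnu, hsp, hsq⟩ := ball_facts hc0 hz
  have h1 : HasDerivAt (fun z : ℂ => 1 + z * I) I z := by
    simpa using ((hasDerivAt_id z).mul_const I).const_add 1
  have h2 : HasDerivAt (fun z : ℂ => 1 - z * I) (-I) z := by
    simpa using ((hasDerivAt_id z).mul_const I).const_sub 1
  have hq : HasDerivAt (fun z : ℂ => (1 + z * I) / (1 - z * I))
      ((I * (1 - z * I) - (1 + z * I) * (-I)) / (1 - z * I) ^ 2) z := h1.div h2 hde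
  have hlog := (hq.clog hsp).const_mul (-I / 2)
  have heq : -I / 2 * ((I * (1 - z * I) - (1 + z * I) * (-I)) / (1 - z * I) ^ 2 /
      ((1 + z * I) / (1 - z * I))) = 1 / (1 + z ^ 2) := by
    have hnum2 : I * (1 - z * I) - (1 + z * I) * (-I) = 2 * I := by ring
    have hfac : (1 : ℂ) + z ^ 2 = (1 - z * I) * (1 + z * I) := by
      linear_combination (z ^ 2 : ℂ) * Complex.I_sq
    rw [hnum2, hfac]
    generalize 1 - z * I = A at hde ⊢
    generalize 1 + z * I = B at hnu ⊢
    field_simp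
    ring_nf
    rw [Complex.I_sq]
    ring
  rw [heq] at hlog
  exact hlog.congr_of_eventuallyEq (by filter_upwards with w; rfl)

theorem pi_eq_double_series_key (L ℓ : ℕ) (hL : 0 < L) (hℓ1 : 1 ≤ ℓ) (hℓL : ℓ ≤ L) :
    HasSum (fun m : ℕ =>
        (((-1 : ℝ) ^ m + 1) / ((2 * L : ℝ) ^ (m + 1) * ((m + 1).factorial : ℝ))) *
          iteratedDeriv m (fun t : ℝ => 1 / (1 + t ^ 2)) ((2 * (ℓ : ℝ) - 1) / (2 * L)))
      (Real.arctan (((2 * (ℓ : ℝ) - 1) / (2 * L)) + 1 / (2 * L)) -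
        Real.arctan (((2 * (ℓ : ℝ) - 1) / (2 * L)) - 1 / (2 * L))) := by
  have hLR : (0 : ℝ) < L := by exact_mod_cast hL
  have hL1R : (1 : ℝ) ≤ L := by exact_mod_cast hL
  have hℓR : (1 : ℝ) ≤ ℓ := by exact_mod_cast hℓ1
  set c : ℝ := (2 * (ℓ : ℝ) - 1) / (2 * L) with hc
  have hc0 : 0 < c := by
    apply div_pos <;> nlinarith
  have hdiff : DifferentiableOn ℂ Complex.arctan (Metric.ball (c : ℂ) 1) := fun z hz =>
    ((arctan_hasDerivAt hc0 hz).differentiableAt).differentiableWithinAt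
  set d : ℝ := 1 / (2 * L) with hd
  have hd0 : 0 < d := by positivity
  have hd1 : d < 1 := by
    rw [hd, div_lt_one (by positivity)]
    nlinarith
  have hmem₁ : ((c + d : ℝ) : ℂ) ∈ Metric.ball (c : ℂ) 1 := by
    rw [Metric.mem_ball, show ((c + d : ℝ) : ℂ) = (c : ℂ) + (d : ℝ) by push_cast; ring]
    simpa [Complex.dist_eq, Complex.norm_real, Real.norm_eq_abs, abs_of_pos hd0] using hd1
  have hmem₂ : ((c - d : ℝ) : ℂ) ∈ Metric.ball (c : ℂ) 1 := by
    rw [Metric.mem_ball, show ((c - d : ℝ) : ℂ) = (c : ℂ) - (d : ℝ) by push_cast; ring]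
    simpa [Complex.dist_eq, Complex.norm_real, Real.norm_eq_abs, abs_of_pos hd0] using hd1
  have S := (Complex.hasSum_taylorSeries_on_ball hdiff hmem₁).sub
    (Complex.hasSum_taylorSeries_on_ball hdiff hmem₂)
  have hcball : (c : ℂ) ∈ Metric.ball (c : ℂ) 1 := Metric.mem_ball_self one_pos
  have hev : deriv Complex.arctan =ᶠ[𝓝 (c : ℂ)] Gc := by
    filter_upwards [Metric.isOpen_ball.mem_nhds hcball] with z hz
    exact (arctan_hasDerivAt hc0 hz).deriv
  have hiter : ∀ m : ℕ, iteratedDeriv (m + 1) Complex.arctan (c : ℂ) =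
      ((iteratedDeriv m (fun t : ℝ => 1 / (1 + t ^ 2)) c : ℝ) : ℂ) := by
    intro m
    rw [iteratedDeriv_succ', hev.iteratedDeriv_eq m, iter_ofReal m c]
  have S' := (hasSum_nat_add_iff' 1).mpr S
  simp only [Finset.sum_range_one, pow_zero, one_smul, sub_self, sub_zero] at S'
  have hterm : ∀ m : ℕ,
      ((m + 1).factorial : ℂ)⁻¹ • (((c + d : ℝ) : ℂ) - c) ^ (m + 1) •
          iteratedDeriv (m + 1) Complex.arctan (c : ℂ) -
        ((m + 1).factorial : ℂ)⁻¹ • (((c - d : ℝ) : ℂ) - c) ^ (m + 1) •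
          iteratedDeriv (m + 1) Complex.arctan (c : ℂ) =
      ((((-1 : ℝ) ^ m + 1) / ((2 * L : ℝ) ^ (m + 1) * ((m + 1).factorial : ℝ)) *
        iteratedDeriv m (fun t : ℝ => 1 / (1 + t ^ 2)) c : ℝ) : ℂ) := by
    intro m
    have h1 : (((c + d : ℝ) : ℂ) - c) = (d : ℂ) := by push_cast; ring
    have h2 : (((c - d : ℝ) : ℂ) - c) = -(d : ℂ) := by push_cast; ring
    rw [h1, h2, hiter m]
    have hfac : ((m + 1).factorial : ℂ) ≠ 0 := by
      exact_mod_cast (Nat.factorial_ne_zero (m + 1))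
    have hLC : ((L : ℂ)) ≠ 0 := Nat.cast_ne_zero.mpr hL.ne'
    have hd' : ((d : ℝ) : ℂ) ^ (m + 1) = ((2 * (L : ℂ)) ^ (m + 1))⁻¹ := by
      rw [hd]; push_cast; rw [← inv_pow, one_div]
    rw [neg_pow, smul_eq_mul, smul_eq_mul, hd', pow_succ (-1 : ℂ) m]
    push_cast
    field_simp
    ring_nf
    have ea : ((1 + m).factorial : ℂ) * ((1 + m).factorial : ℂ)⁻¹ = 1 :=
      mul_inv_cancel₀ (by rw [add_comm]; exact hfac)
    have eb : (L : ℂ) * (L : ℂ)⁻¹ = 1 := mul_inv_cancel₀ hLC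
    have ec : (L : ℂ) ^ m * (L : ℂ)⁻¹ ^ m = 1 := by rw [← mul_pow, eb, one_pow]
    have ed : (2 : ℂ)⁻¹ ^ m * 2 ^ m = 1 := by
      rw [← mul_pow, inv_mul_cancel₀ (two_ne_zero), one_pow]
    linear_combination (↑(iteratedDeriv m (fun t : ℝ => (1 + t ^ 2)⁻¹) c : ℝ) : ℂ) * (-1) ^ m *
      (((L : ℂ) * (L : ℂ)⁻¹) * ((L : ℂ) ^ m * (L : ℂ)⁻¹ ^ m) * ((2 : ℂ)⁻¹ ^ m * 2 ^ m) * ea +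
        ((L : ℂ) ^ m * (L : ℂ)⁻¹ ^ m) * ((2 : ℂ)⁻¹ ^ m * 2 ^ m) * eb +
        ((2 : ℂ)⁻¹ ^ m * 2 ^ m) * ec + ed)
  have Sfin := S'.congr_fun fun m => (hterm m).symm
  rw [show Complex.arctan ((c + d : ℝ) : ℂ) - Complex.arctan ((c - d : ℝ) : ℂ) =
      ((Real.arctan (c + d) - Real.arctan (c - d) : ℝ) : ℂ) by
    rw [← Complex.ofReal_arctan, ← Complex.ofReal_arctan, ← Complex.ofReal_sub]] at Sfin
  exact Complex.hasSum_ofReal.mp Sfin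

theorem pi_eq_double_series (L : ℕ) (hL : 0 < L) :
    (∀ ℓ ∈ Finset.Icc 1 L,
      Summable (fun m : ℕ =>
        (((-1 : ℝ) ^ m + 1) / ((2 * L : ℝ) ^ (m + 1) * ((m + 1).factorial : ℝ))) *
          iteratedDeriv m (fun t : ℝ => 1 / (1 + t ^ 2))
            ((2 * (ℓ : ℝ) - 1) / (2 * L)))) ∧
    Real.pi =
      4 * ∑ ℓ ∈ Finset.Icc 1 L, ∑' m : ℕ,
        (((-1 : ℝ) ^ m + 1) / ((2 * L : ℝ) ^ (m + 1) * ((m + 1).factorial : ℝ))) *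
          iteratedDeriv m (fun t : ℝ => 1 / (1 + t ^ 2))
            ((2 * (ℓ : ℝ) - 1) / (2 * L)) := by
  have hLR : (0 : ℝ) < L := by exact_mod_cast hL
  constructor
  · intro ℓ hℓ
    rw [Finset.mem_Icc] at hℓ
    exact (pi_eq_double_series_key L ℓ hL hℓ.1 hℓ.2).summable
  · have htsum : ∀ ℓ ∈ Finset.Icc 1 L,
        (∑' m : ℕ,
          (((-1 : ℝ) ^ m + 1) / ((2 * L : ℝ) ^ (m + 1) * ((m + 1).factorial : ℝ))) *
            iteratedDeriv m (fun t : ℝ => 1 / (1 + t ^ 2))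
              ((2 * (ℓ : ℝ) - 1) / (2 * L))) =
        Real.arctan ((ℓ : ℝ) / L) - Real.arctan (((ℓ : ℝ) - 1) / L) := by
      intro ℓ hℓ
      rw [Finset.mem_Icc] at hℓ
      rw [(pi_eq_double_series_key L ℓ hL hℓ.1 hℓ.2).tsum_eq]
      congr 2
      · field_simp; ring
      · field_simp; ring
    rw [Finset.sum_congr rfl htsum]
    have hshift : ∑ ℓ ∈ Finset.Icc 1 L,
        (Real.arctan ((ℓ : ℝ) / L) - Real.arctan (((ℓ : ℝ) - 1) / L)) =
        ∑ i ∈ Finset.range L,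
          (Real.arctan (((i + 1 : ℕ) : ℝ) / L) - Real.arctan (((i : ℕ) : ℝ) / L)) := by
      rw [← Finset.Ico_add_one_right_eq_Icc, Finset.sum_Ico_eq_sum_range]
      apply Finset.sum_congr (by norm_num)
      intro i _
      congr 2 <;> push_cast <;> ring
    rw [hshift, Finset.sum_range_sub (fun i => Real.arctan (((i : ℕ) : ℝ) / L))]
    simp only [Nat.cast_zero, zero_div, Real.arctan_zero, sub_zero]
    rw [div_self hLR.ne', Real.arctan_one]
    ring
end

section
/- For every positive integer L and every real number x with |x| < 2L, arctan(x) = Σ_{ℓ=1}^{L} Σ_{m=0}^{∞} ((−1)^m + 1)/((2L)^{m+1} (m+1)!) · (d^m/dt^m)[x/(1 + x²t²)] evaluated at t = (2ℓ−1)/(2L), where the inner series converges for each ℓ. -/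
open Complex

lemma aux_ne (x t : ℝ) : (1 : ℂ) - I * x * t ≠ 0 := by
  intro h
  have := congrArg Complex.re h
  simp at this

lemma aux_hasDerivAt (x : ℝ) (m : ℕ) (t : ℝ) :
    HasDerivAt (fun s : ℝ => ((1 : ℂ) - I * x * s)⁻¹ ^ (m + 1))
      ((m + 1) * (I * x) * ((1 : ℂ) - I * x * t)⁻¹ ^ (m + 2)) t := by
  have h1 : HasDerivAt (fun z : ℂ => ((1 : ℂ) - I * x * z)) (-(I * x)) (t : ℂ) := by
    simpa using ((hasDerivAt_id (t : ℂ)).const_mul (I * x)).const_sub 1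
  have h2 : HasDerivAt (fun z : ℂ => ((1 : ℂ) - I * x * z)⁻¹)
      (-(-(I * x)) / ((1 : ℂ) - I * x * t) ^ 2) (t : ℂ) := h1.inv (aux_ne x t)
  have h3 := (h2.pow (m + 1)).comp_ofReal
  convert h3 using 1
  have hne := aux_ne x t
  field_simp
  ring_nf
  funext s
  simp only [Pi.pow_apply]
  ring
  have hne := aux_ne x t
  rw [Nat.add_sub_cancel, neg_neg, inv_pow, inv_pow]
  push_cast
  field_simp
  ring

lemma aux_iteratedDeriv (x : ℝ) (m : ℕ) : ∀ t : ℝ,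
    iteratedDeriv m (fun t : ℝ => x / (1 + x ^ 2 * t ^ 2)) t
      = ((x : ℂ) * (I * x) ^ m * (m.factorial : ℂ) * ((1 : ℂ) - I * x * t)⁻¹ ^ (m + 1)).re := by
  induction m with
  | zero =>
    intro t
    rw [iteratedDeriv_zero]
    have hne := aux_ne x t
    have h0 : ((x : ℂ) * (I * x) ^ 0 * ((0).factorial : ℂ) * ((1 : ℂ) - I * x * t)⁻¹ ^ (0 + 1))
        = (x : ℂ) / ((1 : ℂ) - I * x * t) := by
      simp [div_eq_mul_inv]
    rw [h0, Complex.div_re]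
    simp [Complex.normSq_apply]
    ring_nf
  | succ m ih =>
    intro t
    rw [iteratedDeriv_succ]
    have hfe : iteratedDeriv m (fun t : ℝ => x / (1 + x ^ 2 * t ^ 2))
        = fun s : ℝ => ((x : ℂ) * (I * x) ^ m * (m.factorial : ℂ)
            * ((1 : ℂ) - I * x * s)⁻¹ ^ (m + 1)).re := funext ih
    rw [hfe]
    have hd : HasDerivAt (fun s : ℝ => ((x : ℂ) * (I * x) ^ m * (m.factorial : ℂ)
            * ((1 : ℂ) - I * x * s)⁻¹ ^ (m + 1)).re)
        ((((x : ℂ) * (I * x) ^ m * (m.factorial : ℂ))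
          * ((m + 1) * (I * x) * ((1 : ℂ) - I * x * t)⁻¹ ^ (m + 2))).re) t :=
      Complex.reCLM.hasFDerivAt.comp_hasDerivAt t ((aux_hasDerivAt x m t).const_mul _)
    rw [hd.deriv]
    congr 1
    push_cast [Nat.factorial_succ]
    ring

lemma aux_arg_mul (z₁ z₂ : ℂ) (h1 : 0 < z₁.re) (h2 : 0 < z₂.re) :
    arg (z₁ * z₂) = arg z₁ + arg z₂ := by
  have hz1 : z₁ ≠ 0 := fun h => by simp [h] at h1
  have hz2 : z₂ ≠ 0 := fun h => by simp [h] at h2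
  have ha1 : |arg z₁| < Real.pi / 2 := abs_arg_lt_pi_div_two_iff.2 (Or.inl h1)
  have ha2 : |arg z₂| < Real.pi / 2 := abs_arg_lt_pi_div_two_iff.2 (Or.inl h2)
  have h1' := abs_lt.1 ha1
  have h2' := abs_lt.1 ha2
  have hlog := Complex.log_mul hz1 hz2 (by
    constructor <;> [linarith [h1'.1, h2'.1]; linarith [h1'.2, h2'.2, Real.pi_pos]])
  have := congrArg Complex.im hlog
  simpa [Complex.log_im] using this

lemma aux_arg (p : ℝ) : arg (1 - I * p) = -Real.arctan p := by
  have hre : ((1 : ℂ) - I * p).re = 1 := by simp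
  have him : ((1 : ℂ) - I * p).im = -p := by simp
  have ha : |arg (1 - I * p)| < Real.pi / 2 :=
    abs_arg_lt_pi_div_two_iff.2 (Or.inl (by rw [hre]; norm_num))
  have h' := abs_lt.1 ha
  have := Real.arctan_tan (x := arg (1 - I * p)) h'.1 h'.2
  rw [Complex.tan_arg, hre, him] at this
  rw [← this]
  norm_num

lemma aux_inner (L : ℕ) (hL : 0 < L) (x : ℝ) (hx : |x| < 2 * L) (ℓ : ℕ)
    (hℓ1 : 1 ≤ ℓ) (hℓ2 : ℓ ≤ L) :
    HasSum (fun m : ℕ =>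
      (((-1 : ℝ) ^ m + 1) / ((2 * L : ℝ) ^ (m + 1) * ((m + 1).factorial : ℝ))) *
        iteratedDeriv m (fun t : ℝ => x / (1 + x ^ 2 * t ^ 2)) ((2 * (ℓ : ℝ) - 1) / (2 * L)))
      (Real.arctan (x * ℓ / L) - Real.arctan (x * ((ℓ : ℝ) - 1) / L)) := by
  set t₀ : ℝ := (2 * (ℓ : ℝ) - 1) / (2 * L) with ht₀
  set u : ℂ := ((1 : ℂ) - I * x * t₀)⁻¹ with hu
  set w : ℂ := I * x * u / (2 * L) with hw
  have hLR : (0 : ℝ) < 2 * L := by positivity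
  have hLC : (2 * (L : ℂ)) ≠ 0 := by
    simp; exact_mod_cast hL.ne'
  have hune : ((1 : ℂ) - I * x * t₀) ≠ 0 := aux_ne x t₀
  -- norm bound
  have hnu : ‖u‖ ≤ 1 := by
    rw [hu, norm_inv]
    have h1 : (1 : ℝ) ≤ ‖(1 : ℂ) - I * x * t₀‖ := by
      have := Complex.abs_re_le_norm ((1 : ℂ) - I * x * t₀)
      simpa using this
    rw [inv_le_one_iff₀]
    right; exact h1
  have hwn : ‖w‖ < 1 := by
    rw [hw]
    rw [norm_div, norm_mul, norm_mul]
    have h2L : ‖(2 * (L : ℂ))‖ = 2 * L := by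
      rw [show (2 * (L : ℂ)) = ((2 * L : ℝ) : ℂ) by push_cast; ring]
      rw [Complex.norm_real, Real.norm_eq_abs, abs_of_pos hLR]
    rw [h2L, Complex.norm_I, one_mul, Complex.norm_real, Real.norm_eq_abs]
    rw [div_lt_one hLR]
    calc |x| * ‖u‖ ≤ |x| * 1 := by gcongr
    _ = |x| := mul_one _
    _ < 2 * L := hx
  -- Taylor series of log
  have HS1 := Complex.hasSum_taylorSeries_log hwn
  have HS2 := Complex.hasSum_taylorSeries_neg_log hwn
  have HS := HS1.add HS2
  set f : ℕ → ℂ := fun n : ℕ => (-1) ^ (n + 1) * w ^ n / n + w ^ n / n with hf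
  have HS' : HasSum (fun m : ℕ => f (m + 1)) (Complex.log (1 + w) - Complex.log (1 - w)) := by
    refine (hasSum_nat_add_iff (f := f) 1).2 ?_
    have hf0 : ∑ i ∈ Finset.range 1, f i = 0 := by simp [hf]
    rw [hf0, add_zero]
    simpa [sub_eq_add_neg] using HS
  have HSim := Complex.imCLM.hasSum HS'
  set a : ℝ := x * (((ℓ : ℝ) - 1) / L) with ha
  set b : ℝ := x * ((ℓ : ℝ) / L) with hb
  have hLne : (L : ℂ) ≠ 0 := by exact_mod_cast hL.ne'
  have hune' := hune
  rw [ht₀] at hune'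
  push_cast at hune'
  have huv : u * ((1 : ℂ) - I * x * t₀) = 1 := inv_mul_cancel₀ hune
  have hfa : (1 : ℂ) + w = (1 - I * (a : ℝ)) * u := by
    refine mul_right_cancel₀ hune ?_
    rw [mul_assoc ((1:ℂ) - I * (a:ℝ)) u, huv, mul_one, hw]
    have hexp : (1 + I * ↑x * u / (2 * ↑L)) * ((1 : ℂ) - I * x * t₀)
        = (1 - I * x * t₀) + I * ↑x * (u * ((1 : ℂ) - I * x * t₀)) / (2 * ↑L) := by
      ring
    rw [hexp, huv, mul_one, ht₀, ha]
    push_cast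
    field_simp
    ring
  have hfb : (1 : ℂ) - w = (1 - I * (b : ℝ)) * u := by
    refine mul_right_cancel₀ hune ?_
    rw [mul_assoc ((1:ℂ) - I * (b:ℝ)) u, huv, mul_one, hw]
    have hexp : (1 - I * ↑x * u / (2 * ↑L)) * ((1 : ℂ) - I * x * t₀)
        = (1 - I * x * t₀) - I * ↑x * (u * ((1 : ℂ) - I * x * t₀)) / (2 * ↑L) := by
      ring
    rw [hexp, huv, mul_one, ht₀, hb]
    push_cast
    field_simp
    ring
  have hure : 0 < u.re := by
    rw [hu, Complex.inv_re]
    apply div_pos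
    · simp
    · exact Complex.normSq_pos.2 hune
  have hsumval : (Complex.log (1 + w) - Complex.log (1 - w)).im
      = Real.arctan (x * ℓ / L) - Real.arctan (x * ((ℓ : ℝ) - 1) / L) := by
    rw [Complex.sub_im, Complex.log_im, Complex.log_im, hfa, hfb]
    rw [aux_arg_mul _ _ (by simp) hure, aux_arg_mul _ _ (by simp) hure]
    rw [aux_arg, aux_arg]
    rw [ha, hb]
    rw [show x * ((ℓ : ℝ) / L) = x * ℓ / L by ring,
        show x * (((ℓ : ℝ) - 1) / L) = x * ((ℓ : ℝ) - 1) / L by ring]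
    ring
  have hterm : (fun m : ℕ => Complex.imCLM (f (m + 1))) = (fun m : ℕ =>
      (((-1 : ℝ) ^ m + 1) / ((2 * L : ℝ) ^ (m + 1) * ((m + 1).factorial : ℝ))) *
        iteratedDeriv m (fun t : ℝ => x / (1 + x ^ 2 * t ^ 2)) t₀) := by
    funext m
    rw [aux_iteratedDeriv x m t₀, ← hu]
    have hm1 : ((m + 1 : ℕ) : ℂ) ≠ 0 := by exact_mod_cast (Nat.succ_ne_zero m)
    have hfct : ((m.factorial : ℕ) : ℂ) ≠ 0 := by exact_mod_cast (Nat.factorial_ne_zero m)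
    have hIm : (-I) * (I * (x : ℂ)) ^ (m + 1) = (I * (x : ℂ)) ^ m * x := by
      rw [pow_succ]
      linear_combination (-((I * (x : ℂ)) ^ m * (x : ℂ))) * Complex.I_mul_I
    have hwpow : w ^ (m + 1) = (I * (x : ℂ)) ^ (m + 1) * u ^ (m + 1) / (2 * (L : ℂ)) ^ (m + 1) := by
      rw [hw, div_pow, mul_pow]
    have hkey : (-I) * w ^ (m + 1) = (I * (x : ℂ)) ^ m * x * u ^ (m + 1) / (2 * (L : ℂ)) ^ (m + 1) := by
      rw [hwpow]
      linear_combination (u ^ (m + 1) / (2 * (L : ℂ)) ^ (m + 1)) * hIm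
    have hEZ : ((((-1 : ℝ) ^ m + 1) / ((2 * L : ℝ) ^ (m + 1) * ((m + 1).factorial : ℝ)) : ℝ) : ℂ)
          * ((x : ℂ) * (I * ↑x) ^ m * (m.factorial : ℂ) * u ^ (m + 1))
        = (-I) * f (m + 1) := by
      rw [hf]
      have hsplit : (-I) * ((-1 : ℂ) ^ (m + 1 + 1) * w ^ (m + 1) / ((m + 1 : ℕ) : ℂ)
            + w ^ (m + 1) / ((m + 1 : ℕ) : ℂ))
          = (((-1 : ℂ) ^ (m + 1 + 1) + 1) / ((m + 1 : ℕ) : ℂ)) * ((-I) * w ^ (m + 1)) := by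
        ring
      simp only []
      rw [hsplit, hkey]
      have hpow : ((2 : ℂ) * (L : ℂ)) ^ (m + 1) ≠ 0 := pow_ne_zero _ hLC
      have hd1 : ((2 * L : ℝ) ^ (m + 1) * (((m + 1).factorial : ℕ) : ℝ)) ≠ 0 :=
        mul_ne_zero (pow_ne_zero _ hLR.ne') (Nat.cast_ne_zero.mpr (Nat.factorial_ne_zero _))
      have hd2 : ((2 * L : ℝ) ^ (m + 1) * (((m + 1) : ℕ) : ℝ)) ≠ 0 :=
        mul_ne_zero (pow_ne_zero _ hLR.ne') (Nat.cast_ne_zero.mpr (Nat.succ_ne_zero m))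
      have hr : (((-1 : ℝ) ^ m + 1) / ((2 * L : ℝ) ^ (m + 1) * ((m + 1).factorial : ℝ)))
            * (m.factorial : ℝ)
          = ((-1 : ℝ) ^ m + 1) / ((2 * L : ℝ) ^ (m + 1) * (((m + 1) : ℕ) : ℝ)) := by
        rw [div_mul_eq_mul_div, div_eq_div_iff hd1 hd2, Nat.factorial_succ]
        push_cast
        ring
      have hgroup : ((((-1 : ℝ) ^ m + 1) / ((2 * L : ℝ) ^ (m + 1) * ((m + 1).factorial : ℝ)) : ℝ) : ℂ)
            * (m.factorial : ℂ)
          = ((-1 : ℂ) ^ m + 1) / ((2 * (L : ℂ)) ^ (m + 1) * ((m + 1 : ℕ) : ℂ)) := by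
        calc ((((-1 : ℝ) ^ m + 1) / ((2 * L : ℝ) ^ (m + 1) * ((m + 1).factorial : ℝ)) : ℝ) : ℂ)
              * (m.factorial : ℂ)
            = ((((((-1 : ℝ) ^ m + 1) / ((2 * L : ℝ) ^ (m + 1) * ((m + 1).factorial : ℝ)))
                * (m.factorial : ℝ) : ℝ)) : ℂ) := by push_cast; ring
          _ = ((((-1 : ℝ) ^ m + 1) / ((2 * L : ℝ) ^ (m + 1) * (((m + 1) : ℕ) : ℝ)) : ℝ) : ℂ) := by
              rw [hr]
          _ = ((-1 : ℂ) ^ m + 1) / ((2 * (L : ℂ)) ^ (m + 1) * ((m + 1 : ℕ) : ℂ)) := by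
              push_cast; ring
      linear_combination ((x : ℂ) * (I * (x : ℂ)) ^ m * u ^ (m + 1)) * hgroup
    have hre := congrArg Complex.re hEZ
    have h2 : ((-I) * f (m + 1)).re = (f (m + 1)).im := by simp
    simp only [Complex.imCLM_apply]
    rw [← h2, ← hre, Complex.re_ofReal_mul]
  rw [hterm] at HSim
  simp only [Complex.imCLM_apply] at HSim
  rw [hsumval] at HSim
  exact HSim

theorem arctan_eq_double_series (L : ℕ) (hL : 0 < L) (x : ℝ) (hx : |x| < 2 * L) :
    (∀ ℓ ∈ Finset.Icc 1 L,
      Summable (fun m : ℕ =>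
        (((-1 : ℝ) ^ m + 1) / ((2 * L : ℝ) ^ (m + 1) * ((m + 1).factorial : ℝ))) *
          iteratedDeriv m (fun t : ℝ => x / (1 + x ^ 2 * t ^ 2))
            ((2 * (ℓ : ℝ) - 1) / (2 * L)))) ∧
    Real.arctan x =
      ∑ ℓ ∈ Finset.Icc 1 L, ∑' m : ℕ,
        (((-1 : ℝ) ^ m + 1) / ((2 * L : ℝ) ^ (m + 1) * ((m + 1).factorial : ℝ))) *
          iteratedDeriv m (fun t : ℝ => x / (1 + x ^ 2 * t ^ 2))
            ((2 * (ℓ : ℝ) - 1) / (2 * L)) := by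
  have key : ∀ ℓ ∈ Finset.Icc 1 L,
      HasSum (fun m : ℕ =>
        (((-1 : ℝ) ^ m + 1) / ((2 * L : ℝ) ^ (m + 1) * ((m + 1).factorial : ℝ))) *
          iteratedDeriv m (fun t : ℝ => x / (1 + x ^ 2 * t ^ 2))
            ((2 * (ℓ : ℝ) - 1) / (2 * L)))
        (Real.arctan (x * ℓ / L) - Real.arctan (x * ((ℓ : ℝ) - 1) / L)) := by
    intro ℓ hℓ
    obtain ⟨h1, h2⟩ := Finset.mem_Icc.1 hℓ
    exact aux_inner L hL x hx ℓ h1 h2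
  refine ⟨fun ℓ hℓ => (key ℓ hℓ).summable, ?_⟩
  rw [Finset.sum_congr rfl (fun ℓ hℓ => (key ℓ hℓ).tsum_eq)]
  set g : ℕ → ℝ := fun i => Real.arctan (x * i / L) with hg
  have hstep : ∀ ℓ ∈ Finset.Icc 1 L,
      Real.arctan (x * ℓ / L) - Real.arctan (x * ((ℓ : ℝ) - 1) / L) = g ℓ - g (ℓ - 1) := by
    intro ℓ hℓ
    obtain ⟨h1, h2⟩ := Finset.mem_Icc.1 hℓ
    simp only [hg]
    rw [Nat.cast_sub h1, Nat.cast_one]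
  rw [Finset.sum_congr rfl hstep]
  rw [show Finset.Icc 1 L = Finset.Ico 1 (L + 1) by rw [Finset.Ico_add_one_right_eq_Icc]]
  rw [Finset.sum_Ico_eq_sum_range]
  simp only [Nat.add_sub_cancel]
  have hterm : ∀ i ∈ Finset.range L, g (1 + i) - g (1 + i - 1) = g (i + 1) - g i := by
    intro i _
    congr 1
    · rw [Nat.add_comm]
    · congr 1
      omega
  rw [Finset.sum_congr rfl hterm, Finset.sum_range_sub g L]
  rw [hg]
  simp only []
  rw [Nat.cast_zero, mul_zero, zero_div, Real.arctan_zero, sub_zero]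
  congr 1
  field_simp
end
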